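/- arXiv:2112.15564 — 6 statements merged into one kernel-verified Lean document; each statement's English description precedes it below -/
import Mathlib

section
/- Let w:[0,1]→ℂ be C² with w(0)=w(1)=0, and let k>0, c₁>0. Then for every z∈[0,1], |w(z)| ≤ (z/√k)·(2c₁·‖w'‖²_{L²(0,1)} + (k²/(2c₁))·‖w''‖²_{L²(0,1)})^{1/2}. -/
open intervalIntegral Real

/-- For `w ∈ C²([0,1];ℂ)` with `w(0)=w(1)=0` and any `k, c₁ > 0`:
`|w(z)| ≤ (z/√k) (2c₁ ‖w'‖² + (k²/(2c₁)) ‖w''‖²)^{1/2}` for every `z ∈ [0,1]`. -/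
theorem stmt4 (w : ℝ → ℂ) (hw : ContDiff ℝ 2 w) (h0 : w 0 = 0) (h1 : w 1 = 0)
    (k c₁ : ℝ) (hk : 0 < k) (hc₁ : 0 < c₁) :
    ∀ z ∈ Set.Icc (0:ℝ) 1,
      ‖w z‖ ≤ (z / Real.sqrt k) *
        Real.sqrt (2 * c₁ * (∫ t in (0:ℝ)..1, ‖deriv w t‖ ^ 2)
          + (k ^ 2 / (2 * c₁)) * (∫ t in (0:ℝ)..1, ‖iteratedDeriv 2 w t‖ ^ 2)) := by
  intro z hz
  set u := deriv w with hu_def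
  set v := deriv u with hv_def
  have hw2 : ContDiff ℝ (1 + 1 : ℕ) w := by exact_mod_cast hw
  have hwd : Differentiable ℝ w := hw.differentiable (by norm_num)
  have hu1 : ContDiff ℝ 1 u := by
    have := (contDiff_succ_iff_deriv (n := 1)).mp (by exact_mod_cast hw2)
    exact this.2.2
  have hud : Differentiable ℝ u := hu1.differentiable one_ne_zero
  have huc : Continuous u := hu1.continuous
  have hvc : Continuous v := (contDiff_one_iff_deriv.mp hu1).2
  have hid : iteratedDeriv 2 w = v := by
    rw [show (2:ℕ) = 1 + 1 from rfl, iteratedDeriv_succ, iteratedDeriv_one]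
  -- component bound via Rolle + FTC
  have comp : ∀ (φ : ℂ →L[ℝ] ℝ), ∀ t ∈ Set.Icc (0:ℝ) 1,
      (φ (u t))^2 ≤ ∫ s in (0:ℝ)..1, 2 * |φ (u s)| * |φ (v s)| := by
    intro φ t ht
    -- Rolle
    have hderw : ∀ x, HasDerivAt (fun y => φ (w y)) (φ (u x)) x := fun x =>
      (φ.hasFDerivAt.comp_hasDerivAt x (hwd x).hasDerivAt)
    obtain ⟨s, hs, hs0⟩ := exists_deriv_eq_zero (f := fun y => φ (w y)) zero_lt_one
      ((φ.continuous.comp hw.continuous).continuousOn) (by simp [h0, h1])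
    have hus : φ (u s) = 0 := by rw [← (hderw s).deriv]; exact hs0
    -- FTC for (φ ∘ u)^2
    have hder : ∀ x, HasDerivAt (fun y => (φ (u y))^2) (2 * φ (u x) * φ (v x)) x := by
      intro x
      have hg : HasDerivAt (fun y => φ (u y)) (φ (v x)) x :=
        (φ.hasFDerivAt.comp_hasDerivAt x (hud x).hasDerivAt)
      have := hg.fun_pow 2
      simpa using this
    have hFc : Continuous (fun x => 2 * φ (u x) * φ (v x)) :=
      (continuous_const.mul (φ.continuous.comp huc)).mul (φ.continuous.comp hvc)
    have hint : ∀ a b : ℝ, IntervalIntegrable (fun x => 2 * φ (u x) * φ (v x))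
        MeasureTheory.volume a b := fun a b => hFc.intervalIntegrable a b
    have hftc : ∫ x in s..t, 2 * φ (u x) * φ (v x) = (φ (u t))^2 - (φ (u s))^2 :=
      intervalIntegral.integral_eq_sub_of_hasDerivAt (fun x _ => hder x) (hint s t)
    have habs : Continuous (fun x => |2 * φ (u x) * φ (v x)|) := hFc.abs
    have keyabs : (φ (u t))^2 ≤ ∫ x in (0:ℝ)..1, |2 * φ (u x) * φ (v x)| := by
      have h1' : (φ (u t))^2 = ∫ x in s..t, 2 * φ (u x) * φ (v x) := by
        rw [hftc, hus]; ring
      have hs0' : (0:ℝ) ≤ s := le_of_lt hs.1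
      have hs1' : s ≤ 1 := le_of_lt hs.2
      rcases le_total s t with hst | hst
      · calc (φ (u t))^2 = ∫ x in s..t, 2 * φ (u x) * φ (v x) := h1'
          _ ≤ |∫ x in s..t, 2 * φ (u x) * φ (v x)| := le_abs_self _
          _ ≤ ∫ x in s..t, |2 * φ (u x) * φ (v x)| :=
              intervalIntegral.abs_integral_le_integral_abs hst
          _ ≤ ∫ x in (0:ℝ)..1, |2 * φ (u x) * φ (v x)| :=
              intervalIntegral.integral_mono_interval hs0' hst ht.2
                (MeasureTheory.ae_of_all _ fun x => abs_nonneg _)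
                (habs.intervalIntegrable 0 1)
      · calc (φ (u t))^2 = ∫ x in s..t, 2 * φ (u x) * φ (v x) := h1'
          _ = -∫ x in t..s, 2 * φ (u x) * φ (v x) := (intervalIntegral.integral_symm t s)
          _ ≤ |∫ x in t..s, 2 * φ (u x) * φ (v x)| := neg_le_abs _
          _ ≤ ∫ x in t..s, |2 * φ (u x) * φ (v x)| :=
              intervalIntegral.abs_integral_le_integral_abs hst
          _ ≤ ∫ x in (0:ℝ)..1, |2 * φ (u x) * φ (v x)| :=
              intervalIntegral.integral_mono_interval ht.1 hst hs1'
                (MeasureTheory.ae_of_all _ fun x => abs_nonneg _)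
                (habs.intervalIntegrable 0 1)
    refine keyabs.trans (le_of_eq ?_)
    congr 1
    ext x
    rw [abs_mul, abs_mul, abs_two, mul_assoc]
  -- sum of the two components
  have key : ∀ t ∈ Set.Icc (0:ℝ) 1,
      ‖u t‖^2 ≤ ∫ s in (0:ℝ)..1, 2 * ‖u s‖ * ‖v s‖ := by
    intro t ht
    have hre := comp Complex.reCLM t ht
    have him := comp Complex.imCLM t ht
    have hnorm : ‖u t‖^2 = (Complex.reCLM (u t))^2 + (Complex.imCLM (u t))^2 := by
      simp only [Complex.reCLM_apply, Complex.imCLM_apply]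
      rw [Complex.sq_norm, Complex.normSq_apply]; ring
    have hcontre : Continuous (fun s => 2 * |Complex.reCLM (u s)| * |Complex.reCLM (v s)|) :=
      (continuous_const.mul (Complex.reCLM.continuous.comp huc).abs).mul
        (Complex.reCLM.continuous.comp hvc).abs
    have hcontim : Continuous (fun s => 2 * |Complex.imCLM (u s)| * |Complex.imCLM (v s)|) :=
      (continuous_const.mul (Complex.imCLM.continuous.comp huc).abs).mul
        (Complex.imCLM.continuous.comp hvc).abs
    have hadd : (∫ s in (0:ℝ)..1, 2 * |Complex.reCLM (u s)| * |Complex.reCLM (v s)|)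
        + (∫ s in (0:ℝ)..1, 2 * |Complex.imCLM (u s)| * |Complex.imCLM (v s)|)
        = ∫ s in (0:ℝ)..1, (2 * |Complex.reCLM (u s)| * |Complex.reCLM (v s)|
            + 2 * |Complex.imCLM (u s)| * |Complex.imCLM (v s)|) :=
      (intervalIntegral.integral_add (hcontre.intervalIntegrable 0 1)
        (hcontim.intervalIntegrable 0 1)).symm
    have hmono : (∫ s in (0:ℝ)..1, (2 * |Complex.reCLM (u s)| * |Complex.reCLM (v s)|
            + 2 * |Complex.imCLM (u s)| * |Complex.imCLM (v s)|))
        ≤ ∫ s in (0:ℝ)..1, 2 * ‖u s‖ * ‖v s‖ := by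
      apply intervalIntegral.integral_mono_on (by norm_num)
        ((hcontre.add hcontim).intervalIntegrable 0 1)
        (((continuous_const.mul huc.norm).mul hvc.norm).intervalIntegrable 0 1)
      intro x _
      simp only [Complex.reCLM_apply, Complex.imCLM_apply, Pi.mul_apply, Pi.add_apply]
      have h1 : ‖u x‖^2 = (u x).re^2 + (u x).im^2 := by
        rw [Complex.sq_norm, Complex.normSq_apply]; ring
      have h2 : ‖v x‖^2 = (v x).re^2 + (v x).im^2 := by
        rw [Complex.sq_norm, Complex.normSq_apply]; ring
      have hcs : |(u x).re| * |(v x).re| + |(u x).im| * |(v x).im| ≤ ‖u x‖ * ‖v x‖ := by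
        nlinarith [sq_nonneg (|(u x).re| * |(v x).im| - |(u x).im| * |(v x).re|),
          norm_nonneg (u x), norm_nonneg (v x), sq_abs (u x).re, sq_abs (u x).im,
          sq_abs (v x).re, sq_abs (v x).im, abs_nonneg (u x).re, abs_nonneg (v x).re,
          abs_nonneg (u x).im, abs_nonneg (v x).im,
          mul_nonneg (norm_nonneg (u x)) (norm_nonneg (v x))]
      nlinarith [hcs]
    calc ‖u t‖^2 = (Complex.reCLM (u t))^2 + (Complex.imCLM (u t))^2 := hnorm
      _ ≤ _ := add_le_add hre him
      _ = _ := hadd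
      _ ≤ _ := hmono
  -- Young's inequality pointwise and integrated
  set A := ∫ t in (0:ℝ)..1, ‖u t‖^2 with hA_def
  set B := ∫ t in (0:ℝ)..1, ‖v t‖^2 with hB_def
  have hA : 0 ≤ A := intervalIntegral.integral_nonneg (by norm_num) (fun x _ => by positivity)
  have hB : 0 ≤ B := intervalIntegral.integral_nonneg (by norm_num) (fun x _ => by positivity)
  have young : ∀ p q : ℝ, 2 * p * q ≤ (2*c₁/k) * p^2 + (k/(2*c₁)) * q^2 := by
    intro p q
    rw [div_mul_eq_mul_div, div_mul_eq_mul_div,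
      div_add_div _ _ (ne_of_gt hk) (by positivity), le_div_iff₀ (by positivity)]
    nlinarith [sq_nonneg (2*c₁*p - k*q)]
  have hMk : ∀ t ∈ Set.Icc (0:ℝ) 1, ‖u t‖^2 ≤ (2*c₁/k) * A + (k/(2*c₁)) * B := by
    intro t ht
    refine (key t ht).trans ?_
    have : (∫ s in (0:ℝ)..1, 2 * ‖u s‖ * ‖v s‖)
        ≤ ∫ s in (0:ℝ)..1, ((2*c₁/k) * ‖u s‖^2 + (k/(2*c₁)) * ‖v s‖^2) := by
      apply intervalIntegral.integral_mono_on (by norm_num)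
        (((continuous_const.mul huc.norm).mul hvc.norm).intervalIntegrable 0 1)
        (((continuous_const.mul (huc.norm.pow 2)).add
          (continuous_const.mul (hvc.norm.pow 2))).intervalIntegrable 0 1)
        (fun x _ => young _ _)
    refine this.trans (le_of_eq ?_)
    rw [intervalIntegral.integral_add (f := fun s => 2*c₁/k * ‖u s‖^2) (g := fun s => k/(2*c₁) * ‖v s‖^2) ((continuous_const.mul (huc.norm.pow 2)).intervalIntegrable 0 1)
      ((continuous_const.mul (hvc.norm.pow 2)).intervalIntegrable 0 1),
      intervalIntegral.integral_const_mul, intervalIntegral.integral_const_mul]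
  set M := 2 * c₁ * A + k^2/(2*c₁) * B with hM_def
  have hM : 0 ≤ M := by positivity
  have hMkeq : (2*c₁/k) * A + (k/(2*c₁)) * B = M / k := by
    rw [hM_def]; field_simp
  have hub : ∀ t ∈ Set.Icc (0:ℝ) 1, ‖u t‖ ≤ Real.sqrt (M / k) := by
    intro t ht
    rw [Real.le_sqrt (norm_nonneg _) (by positivity)]
    rw [← hMkeq]
    exact hMk t ht
  -- FTC for w and the final estimate
  have hwz : w z = ∫ t in (0:ℝ)..z, u t := by
    rw [intervalIntegral.integral_eq_sub_of_hasDerivAt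
      (fun x _ => (hwd x).hasDerivAt) (huc.intervalIntegrable 0 z), h0, sub_zero]
  have hbound : ‖w z‖ ≤ Real.sqrt (M / k) * |z - 0| := by
    rw [hwz]
    apply intervalIntegral.norm_integral_le_of_norm_le_const
    intro x hx
    rw [Set.uIoc_of_le hz.1] at hx
    exact hub x ⟨le_of_lt hx.1, hx.2.trans hz.2⟩
  have hfin : Real.sqrt (M / k) * |z - 0| = (z / Real.sqrt k) * Real.sqrt M := by
    rw [Real.sqrt_div hM, sub_zero, abs_of_nonneg hz.1]
    ring
  rw [hid]
  calc ‖w z‖ ≤ Real.sqrt (M / k) * |z - 0| := hbound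
    _ = (z / Real.sqrt k) * Real.sqrt M := hfin
end

section
/- For each fixed k>0, on the space of functions w∈C⁴([0,1];ℂ) with w(0)=w(1)=0 and w'(0)=w'(1)=0, the inequality ‖w'''' ‖²_{L²} + 6k⁴‖w''‖²_{L²} + k⁸‖w‖²_{L²} + 4k⁶‖w'‖²_{L²} - 4k²∫₀¹|w''''||w''| ≤ ‖w'''' + k⁴w - 2k²w''‖²_{L²} holds; consequently there is a universal constant C>0 such that k²‖w''‖²_{L²(0,1)} + (1/k²)‖w''''‖²_{L²(0,1)} ≤ C·‖w'''' - 2k²w'' + k⁴w‖²_{L²(0,1)}/k². -/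
open intervalIntegral Real

private lemma hasDerivAt_re_conj_mul {p q p' q' : ℝ → ℂ} {x : ℝ}
    (hp : HasDerivAt p (p' x) x) (hq : HasDerivAt q (q' x) x) :
    HasDerivAt (fun z => ((starRingEnd ℂ) (p z) * q z).re)
      (((starRingEnd ℂ) (p' x) * q x).re + ((starRingEnd ℂ) (p x) * q' x).re) x := by
  have h2 := hp.star.mul hq
  have h3 := Complex.reCLM.hasFDerivAt.comp_hasDerivAt x h2
  exact h3.congr_deriv (by simp) |>.congr_of_eventuallyEq
    (by filter_upwards with z; simp [Function.comp])

private lemma ibp {p q p' q' : ℝ → ℂ}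
    (hp : ∀ x, HasDerivAt p (p' x) x) (hq : ∀ x, HasDerivAt q (q' x) x)
    (hpc : Continuous p) (hqc : Continuous q)
    (hp'c : Continuous p') (hq'c : Continuous q') :
    (∫ z in (0:ℝ)..1, (((starRingEnd ℂ) (p' z) * q z).re + ((starRingEnd ℂ) (p z) * q' z).re))
      = ((starRingEnd ℂ) (p 1) * q 1).re - ((starRingEnd ℂ) (p 0) * q 0).re := by
  apply intervalIntegral.integral_eq_sub_of_hasDerivAt
    (f := fun x => ((starRingEnd ℂ) (p x) * q x).re)
  · exact fun x _ => hasDerivAt_re_conj_mul (hp x) (hq x)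
  · apply Continuous.intervalIntegrable
    exact (Complex.continuous_re.comp ((Complex.continuous_conj.comp hp'c).mul hqc)).add
      (Complex.continuous_re.comp ((Complex.continuous_conj.comp hpc).mul hq'c))

private lemma conj_mul_self_re (a : ℂ) : ((starRingEnd ℂ) a * a).re = ‖a‖ ^ 2 := by
  rw [Complex.sq_norm, Complex.normSq_apply]
  simp [Complex.mul_re]

private lemma expand_sq (k : ℝ) (a b c : ℂ) :
    ‖a + (k:ℂ) ^ 4 * b - 2 * (k:ℂ) ^ 2 * c‖ ^ 2
      = ‖a‖ ^ 2 + k ^ 8 * ‖b‖ ^ 2 + 4 * k ^ 4 * ‖c‖ ^ 2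
        + 2 * k ^ 4 * ((starRingEnd ℂ) a * b).re
        - 4 * k ^ 2 * ((starRingEnd ℂ) a * c).re
        - 4 * k ^ 6 * ((starRingEnd ℂ) b * c).re := by
  have h : ∀ z : ℂ, ‖z‖ ^ 2 = z.re ^ 2 + z.im ^ 2 := fun z => by
    rw [Complex.sq_norm, Complex.normSq_apply]; ring
  simp only [h, Complex.add_re, Complex.add_im, Complex.sub_re, Complex.sub_im,
    Complex.mul_re, Complex.mul_im, Complex.ofReal_re, Complex.ofReal_im,
    Complex.conj_re, Complex.conj_im, Complex.ofReal_pow,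
    Complex.re_ofNat, Complex.im_ofNat, pow_succ, pow_zero, one_mul]
  ring

private lemma re_conj_mul_le (a b : ℂ) : ((starRingEnd ℂ) a * b).re ≤ ‖a‖ * ‖b‖ := by
  calc ((starRingEnd ℂ) a * b).re ≤ ‖(starRingEnd ℂ) a * b‖ := Complex.re_le_norm _
  _ = ‖a‖ * ‖b‖ := by rw [norm_mul, RCLike.norm_conj]

private lemma master (k : ℝ) (w : ℝ → ℂ) (hw : ContDiff ℝ 4 w)
    (h0 : w 0 = 0) (h1 : w 1 = 0) (h0' : deriv w 0 = 0) (h1' : deriv w 1 = 0) :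
    (∫ z in (0:ℝ)..1, ‖iteratedDeriv 4 w z‖ ^ 2)
      + 6 * k ^ 4 * (∫ z in (0:ℝ)..1, ‖iteratedDeriv 2 w z‖ ^ 2)
      + k ^ 8 * (∫ z in (0:ℝ)..1, ‖w z‖ ^ 2)
      + 4 * k ^ 6 * (∫ z in (0:ℝ)..1, ‖deriv w z‖ ^ 2)
      - 4 * k ^ 2 * (∫ z in (0:ℝ)..1,
          ((starRingEnd ℂ) (iteratedDeriv 4 w z) * iteratedDeriv 2 w z).re)
    = ∫ z in (0:ℝ)..1,
        ‖iteratedDeriv 4 w z + (k:ℂ) ^ 4 * w z - 2 * (k:ℂ) ^ 2 * iteratedDeriv 2 w z‖ ^ 2 := by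
  -- continuity
  have hc0 : Continuous w := hw.continuous
  have hc1 : Continuous (iteratedDeriv 1 w) := hw.continuous_iteratedDeriv 1 (by norm_num)
  have hc2 : Continuous (iteratedDeriv 2 w) := hw.continuous_iteratedDeriv 2 (by norm_num)
  have hc3 : Continuous (iteratedDeriv 3 w) := hw.continuous_iteratedDeriv 3 (by norm_num)
  have hc4 : Continuous (iteratedDeriv 4 w) := hw.continuous_iteratedDeriv 4 (by norm_num)
  -- derivatives
  have hder : ∀ n : ℕ, n < 4 → ∀ x, HasDerivAt (iteratedDeriv n w) (iteratedDeriv (n+1) w x) x := by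
    intro n hn x
    have h := ((hw.differentiable_iteratedDeriv n (by exact_mod_cast hn)) x).hasDerivAt
    rwa [iteratedDeriv_succ]
  have hd0 : ∀ x, HasDerivAt w (iteratedDeriv 1 w x) x := by
    have := hder 0 (by norm_num); simpa [iteratedDeriv_zero] using this
  have hd1 := hder 1 (by norm_num)
  have hd2 := hder 2 (by norm_num)
  have hd3 := hder 3 (by norm_num)
  have h0'' : iteratedDeriv 1 w 0 = 0 := by rw [iteratedDeriv_one]; exact h0'
  have h1'' : iteratedDeriv 1 w 1 = 0 := by rw [iteratedDeriv_one]; exact h1'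
  -- interval integrability of all pieces
  have cross_cont : ∀ {u v : ℝ → ℂ}, Continuous u → Continuous v →
      Continuous fun z => ((starRingEnd ℂ) (u z) * v z).re := fun hu hv =>
    Complex.continuous_re.comp ((Complex.continuous_conj.comp hu).mul hv)
  have ii : ∀ {u v : ℝ → ℂ}, Continuous u → Continuous v →
      IntervalIntegrable (fun z => ((starRingEnd ℂ) (u z) * v z).re)
        MeasureTheory.volume 0 1 := fun hu hv => (cross_cont hu hv).intervalIntegrable 0 1
  -- IBP chain
  have I1 : (∫ z in (0:ℝ)..1, (((starRingEnd ℂ) (iteratedDeriv 4 w z) * w z).re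
      + ((starRingEnd ℂ) (iteratedDeriv 3 w z) * iteratedDeriv 1 w z).re)) = 0 := by
    rw [ibp hd3 hd0 hc3 hc0 hc4 hc1, h0, h1]; simp
  have I2 : (∫ z in (0:ℝ)..1, (((starRingEnd ℂ) (iteratedDeriv 3 w z) * iteratedDeriv 1 w z).re
      + ((starRingEnd ℂ) (iteratedDeriv 2 w z) * iteratedDeriv 2 w z).re)) = 0 := by
    rw [ibp hd2 hd1 hc2 hc1 hc3 hc2, h0'', h1'']; simp
  have I3 : (∫ z in (0:ℝ)..1, (((starRingEnd ℂ) (iteratedDeriv 1 w z) * iteratedDeriv 1 w z).re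
      + ((starRingEnd ℂ) (w z) * iteratedDeriv 2 w z).re)) = 0 := by
    rw [ibp hd0 hd1 hc0 hc1 hc1 hc2, h0, h1]; simp
  rw [intervalIntegral.integral_add (ii hc4 hc0) (ii hc3 hc1)] at I1
  rw [intervalIntegral.integral_add (ii hc3 hc1) (ii hc2 hc2)] at I2
  rw [intervalIntegral.integral_add (ii hc1 hc1) (ii hc0 hc2)] at I3
  -- identify self-pairings with squared norms
  have e2 : (∫ z in (0:ℝ)..1, ((starRingEnd ℂ) (iteratedDeriv 2 w z) * iteratedDeriv 2 w z).re)
      = ∫ z in (0:ℝ)..1, ‖iteratedDeriv 2 w z‖ ^ 2 := by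
    simp_rw [conj_mul_self_re]
  have e1 : (∫ z in (0:ℝ)..1, ((starRingEnd ℂ) (iteratedDeriv 1 w z) * iteratedDeriv 1 w z).re)
      = ∫ z in (0:ℝ)..1, ‖deriv w z‖ ^ 2 := by
    simp_rw [conj_mul_self_re, iteratedDeriv_one]
  -- expand the right-hand side
  have hsum : (∫ z in (0:ℝ)..1,
        ‖iteratedDeriv 4 w z + (k:ℂ) ^ 4 * w z - 2 * (k:ℂ) ^ 2 * iteratedDeriv 2 w z‖ ^ 2)
      = (∫ z in (0:ℝ)..1, ‖iteratedDeriv 4 w z‖ ^ 2)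
        + k ^ 8 * (∫ z in (0:ℝ)..1, ‖w z‖ ^ 2)
        + 4 * k ^ 4 * (∫ z in (0:ℝ)..1, ‖iteratedDeriv 2 w z‖ ^ 2)
        + 2 * k ^ 4 * (∫ z in (0:ℝ)..1, ((starRingEnd ℂ) (iteratedDeriv 4 w z) * w z).re)
        - 4 * k ^ 2 * (∫ z in (0:ℝ)..1,
            ((starRingEnd ℂ) (iteratedDeriv 4 w z) * iteratedDeriv 2 w z).re)
        - 4 * k ^ 6 * (∫ z in (0:ℝ)..1,
            ((starRingEnd ℂ) (w z) * iteratedDeriv 2 w z).re) := by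
    have hn : ∀ {u : ℝ → ℂ}, Continuous u →
        IntervalIntegrable (fun z => ‖u z‖ ^ 2) MeasureTheory.volume 0 1 := fun hu =>
      ((hu.norm.pow 2)).intervalIntegrable 0 1
    have i1 := hn hc4
    have i2 : IntervalIntegrable (fun z => k ^ 8 * ‖w z‖ ^ 2) MeasureTheory.volume 0 1 :=
      (hn hc0).const_mul _
    have i3 : IntervalIntegrable (fun z => 4 * k ^ 4 * ‖iteratedDeriv 2 w z‖ ^ 2)
        MeasureTheory.volume 0 1 := (hn hc2).const_mul _
    have i4 : IntervalIntegrable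
        (fun z => 2 * k ^ 4 * ((starRingEnd ℂ) (iteratedDeriv 4 w z) * w z).re)
        MeasureTheory.volume 0 1 := (ii hc4 hc0).const_mul _
    have i5 : IntervalIntegrable
        (fun z => 4 * k ^ 2 * ((starRingEnd ℂ) (iteratedDeriv 4 w z) * iteratedDeriv 2 w z).re)
        MeasureTheory.volume 0 1 := (ii hc4 hc2).const_mul _
    have i6 : IntervalIntegrable
        (fun z => 4 * k ^ 6 * ((starRingEnd ℂ) (w z) * iteratedDeriv 2 w z).re)
        MeasureTheory.volume 0 1 := (ii hc0 hc2).const_mul _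
    simp_rw [expand_sq k]
    rw [intervalIntegral.integral_sub ((((i1.add i2).add i3).add i4).sub i5) i6,
      intervalIntegral.integral_sub (((i1.add i2).add i3).add i4) i5,
      intervalIntegral.integral_add ((i1.add i2).add i3) i4,
      intervalIntegral.integral_add (i1.add i2) i3,
      intervalIntegral.integral_add i1 i2,
      intervalIntegral.integral_const_mul, intervalIntegral.integral_const_mul,
      intervalIntegral.integral_const_mul, intervalIntegral.integral_const_mul,
      intervalIntegral.integral_const_mul]
  rw [e2] at I2
  rw [e1] at I3
  have hT1 : (∫ z in (0:ℝ)..1, ((starRingEnd ℂ) (iteratedDeriv 4 w z) * w z).re)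
      = ∫ z in (0:ℝ)..1, ‖iteratedDeriv 2 w z‖ ^ 2 := by linarith
  have hT2 : (∫ z in (0:ℝ)..1, ((starRingEnd ℂ) (w z) * iteratedDeriv 2 w z).re)
      = -∫ z in (0:ℝ)..1, ‖deriv w z‖ ^ 2 := by linarith
  rw [hsum, hT1, hT2]; ring

/-- Integration-by-parts inequality for clamped `C⁴` functions, and the resulting
universal coercivity bound for the operator `w'''' - 2k² w'' + k⁴ w`. -/
theorem stmt7 :
    (∀ (k : ℝ), 0 < k → ∀ w : ℝ → ℂ, ContDiff ℝ 4 w →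
      w 0 = 0 → w 1 = 0 → deriv w 0 = 0 → deriv w 1 = 0 →
      (∫ z in (0:ℝ)..1, ‖iteratedDeriv 4 w z‖ ^ 2)
        + 6 * k ^ 4 * (∫ z in (0:ℝ)..1, ‖iteratedDeriv 2 w z‖ ^ 2)
        + k ^ 8 * (∫ z in (0:ℝ)..1, ‖w z‖ ^ 2)
        + 4 * k ^ 6 * (∫ z in (0:ℝ)..1, ‖deriv w z‖ ^ 2)
        - 4 * k ^ 2 * (∫ z in (0:ℝ)..1, ‖iteratedDeriv 4 w z‖ * ‖iteratedDeriv 2 w z‖)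
      ≤ ∫ z in (0:ℝ)..1,
          ‖iteratedDeriv 4 w z + (k:ℂ) ^ 4 * w z - 2 * (k:ℂ) ^ 2 * iteratedDeriv 2 w z‖ ^ 2)
    ∧
    ∃ C : ℝ, 0 < C ∧ ∀ (k : ℝ), 0 < k → ∀ w : ℝ → ℂ, ContDiff ℝ 4 w →
      w 0 = 0 → w 1 = 0 → deriv w 0 = 0 → deriv w 1 = 0 →
      k ^ 2 * (∫ z in (0:ℝ)..1, ‖iteratedDeriv 2 w z‖ ^ 2)
        + (1 / k ^ 2) * (∫ z in (0:ℝ)..1, ‖iteratedDeriv 4 w z‖ ^ 2)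
      ≤ C * (∫ z in (0:ℝ)..1,
          ‖iteratedDeriv 4 w z - 2 * (k:ℂ) ^ 2 * iteratedDeriv 2 w z + (k:ℂ) ^ 4 * w z‖ ^ 2)
            / k ^ 2 := by
  have key : ∀ (k : ℝ), 0 < k → ∀ w : ℝ → ℂ, ContDiff ℝ 4 w →
      w 0 = 0 → w 1 = 0 → deriv w 0 = 0 → deriv w 1 = 0 →
      (∫ z in (0:ℝ)..1, ‖iteratedDeriv 4 w z‖ ^ 2)
        + 6 * k ^ 4 * (∫ z in (0:ℝ)..1, ‖iteratedDeriv 2 w z‖ ^ 2)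
        + k ^ 8 * (∫ z in (0:ℝ)..1, ‖w z‖ ^ 2)
        + 4 * k ^ 6 * (∫ z in (0:ℝ)..1, ‖deriv w z‖ ^ 2)
        - 4 * k ^ 2 * (∫ z in (0:ℝ)..1, ‖iteratedDeriv 4 w z‖ * ‖iteratedDeriv 2 w z‖)
      ≤ ∫ z in (0:ℝ)..1,
          ‖iteratedDeriv 4 w z + (k:ℂ) ^ 4 * w z - 2 * (k:ℂ) ^ 2 * iteratedDeriv 2 w z‖ ^ 2 := by
    intro k hk w hw h0 h1 h0' h1'
    have hm := master k w hw h0 h1 h0' h1'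
    have hc2 : Continuous (iteratedDeriv 2 w) := hw.continuous_iteratedDeriv 2 (by norm_num)
    have hc4 : Continuous (iteratedDeriv 4 w) := hw.continuous_iteratedDeriv 4 (by norm_num)
    have hXM : (∫ z in (0:ℝ)..1,
          ((starRingEnd ℂ) (iteratedDeriv 4 w z) * iteratedDeriv 2 w z).re)
        ≤ ∫ z in (0:ℝ)..1, ‖iteratedDeriv 4 w z‖ * ‖iteratedDeriv 2 w z‖ := by
      apply intervalIntegral.integral_mono_on (by norm_num)
      · exact (Complex.continuous_re.comp
          ((Complex.continuous_conj.comp hc4).mul hc2)).intervalIntegrable 0 1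
      · exact (hc4.norm.mul hc2.norm).intervalIntegrable 0 1
      · exact fun x _ => re_conj_mul_le _ _
    nlinarith [sq_nonneg k, mul_le_mul_of_nonneg_left hXM
      (by positivity : (0:ℝ) ≤ 4 * k ^ 2)]
  refine ⟨key, 7/2, by norm_num, ?_⟩
  intro k hk w hw h0 h1 h0' h1'
  have hc0 : Continuous w := hw.continuous
  have hc2 : Continuous (iteratedDeriv 2 w) := hw.continuous_iteratedDeriv 2 (by norm_num)
  have hc4 : Continuous (iteratedDeriv 4 w) := hw.continuous_iteratedDeriv 4 (by norm_num)
  set A := ∫ z in (0:ℝ)..1, ‖iteratedDeriv 4 w z‖ ^ 2 with hAdef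
  set B := ∫ z in (0:ℝ)..1, ‖iteratedDeriv 2 w z‖ ^ 2 with hBdef
  set R2 := ∫ z in (0:ℝ)..1,
      ‖iteratedDeriv 4 w z - 2 * (k:ℂ) ^ 2 * iteratedDeriv 2 w z + (k:ℂ) ^ 4 * w z‖ ^ 2 with hRdef
  have hRe : R2 = ∫ z in (0:ℝ)..1,
      ‖iteratedDeriv 4 w z + (k:ℂ) ^ 4 * w z - 2 * (k:ℂ) ^ 2 * iteratedDeriv 2 w z‖ ^ 2 := by
    apply intervalIntegral.integral_congr
    intro z _
    show ‖iteratedDeriv 4 w z - 2 * (k:ℂ) ^ 2 * iteratedDeriv 2 w z + (k:ℂ) ^ 4 * w z‖ ^ 2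
      = ‖iteratedDeriv 4 w z + (k:ℂ) ^ 4 * w z - 2 * (k:ℂ) ^ 2 * iteratedDeriv 2 w z‖ ^ 2
    rw [show iteratedDeriv 4 w z - 2 * (k:ℂ) ^ 2 * iteratedDeriv 2 w z + (k:ℂ) ^ 4 * w z
      = iteratedDeriv 4 w z + (k:ℂ) ^ 4 * w z - 2 * (k:ℂ) ^ 2 * iteratedDeriv 2 w z from by ring]
  have hkey := key k hk w hw h0 h1 h0' h1'
  rw [← hRe] at hkey
  -- Young's inequality on the mixed term
  have hY : 4 * k ^ 2 * (∫ z in (0:ℝ)..1, ‖iteratedDeriv 4 w z‖ * ‖iteratedDeriv 2 w z‖)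
      ≤ 7/10 * A + 40/7 * k ^ 4 * B := by
    have hmono : (∫ z in (0:ℝ)..1,
          4 * k ^ 2 * (‖iteratedDeriv 4 w z‖ * ‖iteratedDeriv 2 w z‖))
        ≤ ∫ z in (0:ℝ)..1,
          (7/10 * ‖iteratedDeriv 4 w z‖ ^ 2 + 40/7 * k ^ 4 * ‖iteratedDeriv 2 w z‖ ^ 2) := by
      apply intervalIntegral.integral_mono_on (by norm_num)
      · exact (continuous_const.mul (hc4.norm.mul hc2.norm)).intervalIntegrable 0 1
      · exact ((continuous_const.mul (hc4.norm.pow 2)).add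
          (continuous_const.mul (hc2.norm.pow 2))).intervalIntegrable 0 1
      · intro x _
        nlinarith [sq_nonneg (7 * ‖iteratedDeriv 4 w x‖ - 20 * k ^ 2 * ‖iteratedDeriv 2 w x‖),
          norm_nonneg (iteratedDeriv 4 w x), norm_nonneg (iteratedDeriv 2 w x), sq_nonneg k]
    rw [intervalIntegral.integral_const_mul] at hmono
    rw [intervalIntegral.integral_add (f := fun z => 7/10 * ‖iteratedDeriv 4 w z‖ ^ 2)
      (g := fun z => 40/7 * k ^ 4 * ‖iteratedDeriv 2 w z‖ ^ 2)
      ((continuous_const.mul (hc4.norm.pow 2)).intervalIntegrable 0 1)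
      ((continuous_const.mul (hc2.norm.pow 2)).intervalIntegrable 0 1),
      intervalIntegral.integral_const_mul, intervalIntegral.integral_const_mul] at hmono
    linarith
  -- nonnegativity
  have hA : 0 ≤ A := intervalIntegral.integral_nonneg (by norm_num) fun x _ => sq_nonneg _
  have hB : 0 ≤ B := intervalIntegral.integral_nonneg (by norm_num) fun x _ => sq_nonneg _
  have hD : 0 ≤ ∫ z in (0:ℝ)..1, ‖w z‖ ^ 2 :=
    intervalIntegral.integral_nonneg (by norm_num) fun x _ => sq_nonneg _
  have hE : 0 ≤ ∫ z in (0:ℝ)..1, ‖deriv w z‖ ^ 2 :=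
    intervalIntegral.integral_nonneg (by norm_num) fun x _ => sq_nonneg _
  have hk2 : (0:ℝ) < k ^ 2 := by positivity
  have hmain : k ^ 4 * B + A ≤ 7/2 * R2 := by
    nlinarith [mul_nonneg (pow_nonneg hk.le 8) hD, mul_nonneg (pow_nonneg hk.le 6) hE,
      mul_nonneg (pow_nonneg hk.le 4) hB, hA, hkey, hY]
  have hrw : k ^ 2 * B + 1 / k ^ 2 * A = (k ^ 4 * B + A) / k ^ 2 := by
    field_simp
  rw [hrw]
  gcongr
end

section
/- Let w∈C⁴([0,1];ℂ) satisfy w(0)=w(1)=0, w'(0)=w'(1)=0 and the ODE (−d²/dz²+k²)²w = R·k²·θ on (0,1), with k>0, R>0 and θ∈L²(0,1). Then there is a universal constant C>0 with k²‖w''‖²_{L²(0,1)} + (1/k²)‖w''''‖²_{L²(0,1)} ≤ C·R²·k²·‖θ‖²_{L²(0,1)}. -/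
open intervalIntegral Real

private lemma conj_mul_self' (z : ℂ) :
    (starRingEnd ℂ) z * z = ((‖z‖ ^ 2 : ℝ) : ℂ) := by
  rw [mul_comm, Complex.mul_conj]
  norm_cast
  simp [Complex.normSq_eq_norm_sq]

set_option maxHeartbeats 2000000 in
/-- Coercivity estimate for the fourth-order Fourier-mode Stokes problem
`(−d²/dz²+k²)² w = R k² θ` with clamped boundary conditions. -/
theorem stmt8 :
    ∃ C : ℝ, 0 < C ∧
      ∀ (k R : ℝ), 0 < k → 0 < R → ∀ (w θ : ℝ → ℂ), ContDiff ℝ 4 w →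
        w 0 = 0 → w 1 = 0 → deriv w 0 = 0 → deriv w 1 = 0 →
        (∀ z ∈ Set.Ioo (0:ℝ) 1,
          iteratedDeriv 4 w z - 2 * (k:ℂ) ^ 2 * iteratedDeriv 2 w z + (k:ℂ) ^ 4 * w z
            = (R:ℂ) * (k:ℂ) ^ 2 * θ z) →
        IntervalIntegrable (fun z => ‖θ z‖ ^ 2) MeasureTheory.volume 0 1 →
        k ^ 2 * (∫ z in (0:ℝ)..1, ‖iteratedDeriv 2 w z‖ ^ 2)
          + (1 / k ^ 2) * (∫ z in (0:ℝ)..1, ‖iteratedDeriv 4 w z‖ ^ 2)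
        ≤ C * R ^ 2 * k ^ 2 * (∫ z in (0:ℝ)..1, ‖θ z‖ ^ 2) := by
  refine ⟨13, by norm_num, ?_⟩
  intro k R hk hR w θ hw hw0 hw1 hdw0 hdw1 hode hθint
  -- continuity and differentiability of iterated derivatives
  have hcont : ∀ m : ℕ, m ≤ 4 → Continuous (iteratedDeriv m w) := fun m hm =>
    hw.continuous_iteratedDeriv m (by exact_mod_cast hm)
  have hder : ∀ m : ℕ, m < 4 → ∀ x : ℝ,
      HasDerivAt (iteratedDeriv m w) (iteratedDeriv (m + 1) w x) x := by
    intro m hm x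
    have h := (hw.differentiable_iteratedDeriv m (by exact_mod_cast hm)) x
    rw [iteratedDeriv_succ]
    exact h.hasDerivAt
  have hderc : ∀ m : ℕ, m < 4 → ∀ x : ℝ,
      HasDerivAt (fun z => (starRingEnd ℂ) (iteratedDeriv m w z))
        ((starRingEnd ℂ) (iteratedDeriv (m + 1) w x)) x := by
    intro m hm x
    exact (hder m hm x).star
  have hintc : ∀ m : ℕ, m ≤ 4 → ∀ n : ℕ, n ≤ 4 →
      IntervalIntegrable (fun z => (starRingEnd ℂ) (iteratedDeriv m w z) * iteratedDeriv n w z)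
        MeasureTheory.volume 0 1 := by
    intro m hm n hn
    exact (((hcont m hm).star).mul (hcont n hn)).intervalIntegrable 0 1
  -- shorthand for the integrals
  set a := ∫ z in (0:ℝ)..1, ‖iteratedDeriv 2 w z‖ ^ 2 with ha_def
  set b := ∫ z in (0:ℝ)..1, ‖iteratedDeriv 1 w z‖ ^ 2 with hb_def
  set c := ∫ z in (0:ℝ)..1, ‖w z‖ ^ 2 with hc_def
  set d := ∫ z in (0:ℝ)..1, ‖iteratedDeriv 4 w z‖ ^ 2 with hd_def
  set t := ∫ z in (0:ℝ)..1, ‖θ z‖ ^ 2 with ht_def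
  have ha0 : 0 ≤ a := intervalIntegral.integral_nonneg (by norm_num) fun _ _ => sq_nonneg _
  have hb0 : 0 ≤ b := intervalIntegral.integral_nonneg (by norm_num) fun _ _ => sq_nonneg _
  have hc0 : 0 ≤ c := intervalIntegral.integral_nonneg (by norm_num) fun _ _ => sq_nonneg _
  have hd0 : 0 ≤ d := intervalIntegral.integral_nonneg (by norm_num) fun _ _ => sq_nonneg _
  have ht0 : 0 ≤ t := intervalIntegral.integral_nonneg (by norm_num) fun _ _ => sq_nonneg _
  clear_value a b c d t
  have hiw0 : iteratedDeriv 0 w = w := iteratedDeriv_zero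
  have hiw1 : iteratedDeriv 1 w = deriv w := iteratedDeriv_one
  -- integration by parts, step 1 :  ∫ conj w · w'''' = - ∫ conj w' · w'''
  have ibp1 : (∫ z in (0:ℝ)..1, (starRingEnd ℂ) (w z) * iteratedDeriv 4 w z)
      = - ∫ z in (0:ℝ)..1, (starRingEnd ℂ) (iteratedDeriv 1 w z) * iteratedDeriv 3 w z := by
    have h := intervalIntegral.integral_mul_deriv_eq_deriv_mul
      (u := fun z => (starRingEnd ℂ) (iteratedDeriv 0 w z)) (v := iteratedDeriv 3 w)
      (u' := fun z => (starRingEnd ℂ) (iteratedDeriv 1 w z)) (v' := iteratedDeriv 4 w)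
      (fun x _ => hderc 0 (by norm_num) x) (fun x _ => hder 3 (by norm_num) x)
      ((((hcont 1 (by norm_num)).star)).intervalIntegrable 0 1)
      ((hcont 4 le_rfl).intervalIntegrable 0 1)
    simp only [iteratedDeriv_zero] at h
    rw [h, hw0, hw1]
    simp
  -- step 2 :  ∫ conj w' · w''' = - ∫ conj w'' · w''
  have ibp2 : (∫ z in (0:ℝ)..1, (starRingEnd ℂ) (iteratedDeriv 1 w z) * iteratedDeriv 3 w z)
      = - ∫ z in (0:ℝ)..1, (starRingEnd ℂ) (iteratedDeriv 2 w z) * iteratedDeriv 2 w z := by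
    have h := intervalIntegral.integral_mul_deriv_eq_deriv_mul
      (u := fun z => (starRingEnd ℂ) (iteratedDeriv 1 w z)) (v := iteratedDeriv 2 w)
      (u' := fun z => (starRingEnd ℂ) (iteratedDeriv 2 w z)) (v' := iteratedDeriv 3 w)
      (fun x _ => hderc 1 (by norm_num) x) (fun x _ => hder 2 (by norm_num) x)
      ((((hcont 2 (by norm_num)).star)).intervalIntegrable 0 1)
      ((hcont 3 (by norm_num)).intervalIntegrable 0 1)
    simp only [iteratedDeriv_one] at h ⊢
    rw [h, hdw0, hdw1]
    simp
  -- step 3 :  ∫ conj w · w'' = - ∫ conj w' · w'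
  have ibp3 : (∫ z in (0:ℝ)..1, (starRingEnd ℂ) (w z) * iteratedDeriv 2 w z)
      = - ∫ z in (0:ℝ)..1, (starRingEnd ℂ) (iteratedDeriv 1 w z) * iteratedDeriv 1 w z := by
    have h := intervalIntegral.integral_mul_deriv_eq_deriv_mul
      (u := fun z => (starRingEnd ℂ) (iteratedDeriv 0 w z)) (v := iteratedDeriv 1 w)
      (u' := fun z => (starRingEnd ℂ) (iteratedDeriv 1 w z)) (v' := iteratedDeriv 2 w)
      (fun x _ => hderc 0 (by norm_num) x) (fun x _ => hder 1 (by norm_num) x)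
      ((((hcont 1 (by norm_num)).star)).intervalIntegrable 0 1)
      ((hcont 2 (by norm_num)).intervalIntegrable 0 1)
    simp only [iteratedDeriv_zero] at h
    rw [h, hw0, hw1]
    simp
  -- squares
  have sq2 : (∫ z in (0:ℝ)..1, (starRingEnd ℂ) (iteratedDeriv 2 w z) * iteratedDeriv 2 w z)
      = ((a : ℝ) : ℂ) := by
    rw [ha_def]
    rw [← intervalIntegral.integral_ofReal]
    exact intervalIntegral.integral_congr fun z _ => conj_mul_self' _
  have sq1 : (∫ z in (0:ℝ)..1, (starRingEnd ℂ) (iteratedDeriv 1 w z) * iteratedDeriv 1 w z)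
      = ((b : ℝ) : ℂ) := by
    rw [hb_def, ← intervalIntegral.integral_ofReal]
    exact intervalIntegral.integral_congr fun z _ => conj_mul_self' _
  have sq0 : (∫ z in (0:ℝ)..1, (starRingEnd ℂ) (w z) * w z) = ((c : ℝ) : ℂ) := by
    rw [hc_def, ← intervalIntegral.integral_ofReal]
    exact intervalIntegral.integral_congr fun z _ => conj_mul_self' _
  -- the full complex identity
  have key : (∫ z in (0:ℝ)..1, (starRingEnd ℂ) (w z) *
        (iteratedDeriv 4 w z - 2 * (k:ℂ) ^ 2 * iteratedDeriv 2 w z + (k:ℂ) ^ 4 * w z))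
      = (((a + 2 * k ^ 2 * b + k ^ 4 * c : ℝ)) : ℂ) := by
    have e1 : ∀ z : ℝ, (starRingEnd ℂ) (w z) *
        (iteratedDeriv 4 w z - 2 * (k:ℂ) ^ 2 * iteratedDeriv 2 w z + (k:ℂ) ^ 4 * w z)
        = (starRingEnd ℂ) (w z) * iteratedDeriv 4 w z
          - (2 * (k:ℂ) ^ 2) * ((starRingEnd ℂ) (w z) * iteratedDeriv 2 w z)
          + ((k:ℂ) ^ 4) * ((starRingEnd ℂ) (w z) * w z) := fun z => by ring
    rw [intervalIntegral.integral_congr (fun z _ => e1 z)]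
    have i1 : IntervalIntegrable (fun z => (starRingEnd ℂ) (w z) * iteratedDeriv 4 w z)
        MeasureTheory.volume 0 1 := by
      simpa [hiw0] using hintc 0 (by norm_num) 4 le_rfl
    have i2 : IntervalIntegrable
        (fun z => (2 * (k:ℂ) ^ 2) * ((starRingEnd ℂ) (w z) * iteratedDeriv 2 w z))
        MeasureTheory.volume 0 1 := by
      simpa [hiw0] using (hintc 0 (by norm_num) 2 (by norm_num)).const_mul (2 * (k:ℂ) ^ 2)
    have i3 : IntervalIntegrable
        (fun z => ((k:ℂ) ^ 4) * ((starRingEnd ℂ) (w z) * w z)) MeasureTheory.volume 0 1 := by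
      simpa [hiw0] using (hintc 0 (by norm_num) 0 (by norm_num)).const_mul ((k:ℂ) ^ 4)
    rw [intervalIntegral.integral_add (i1.sub i2) i3, intervalIntegral.integral_sub i1 i2,
      intervalIntegral.integral_const_mul, intervalIntegral.integral_const_mul,
      ibp1, ibp2, sq2]
    have : (∫ z in (0:ℝ)..1, (starRingEnd ℂ) (w z) * iteratedDeriv 2 w z) = -((b:ℝ):ℂ) := by
      rw [ibp3, sq1]
    rw [this, sq0]
    push_cast
    ring
  -- take real parts
  have hcontL : Continuous (fun z => (starRingEnd ℂ) (w z) *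
      (iteratedDeriv 4 w z - 2 * (k:ℂ) ^ 2 * iteratedDeriv 2 w z + (k:ℂ) ^ 4 * w z)) :=
    ((hw.continuous).star).mul
      (((hcont 4 le_rfl).sub (continuous_const.mul (hcont 2 (by norm_num)))).add
        (continuous_const.mul hw.continuous))
  have hint_lhs : IntervalIntegrable (fun z => (starRingEnd ℂ) (w z) *
      (iteratedDeriv 4 w z - 2 * (k:ℂ) ^ 2 * iteratedDeriv 2 w z + (k:ℂ) ^ 4 * w z))
      MeasureTheory.volume 0 1 := hcontL.intervalIntegrable 0 1
  have keyRe : a + 2 * k ^ 2 * b + k ^ 4 * c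
      = ∫ z in (0:ℝ)..1, ((starRingEnd ℂ) (w z) *
          (iteratedDeriv 4 w z - 2 * (k:ℂ) ^ 2 * iteratedDeriv 2 w z + (k:ℂ) ^ 4 * w z)).re := by
    have := (Complex.reCLM.intervalIntegral_comp_comm hint_lhs).symm
    simp only [Complex.reCLM_apply] at this
    rw [← this, key]
    simp [← Complex.ofReal_pow]
  -- almost-everywhere reduction from Ioo to Icc
  have hae : ∀ {p : ℝ → Prop}, (∀ z ∈ Set.Ioo (0:ℝ) 1, p z) →
      ∀ᵐ z ∂(MeasureTheory.volume.restrict (Set.Icc (0:ℝ) 1)), p z := by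
    intro p hp
    have hmem : ∀ᵐ z ∂(MeasureTheory.volume.restrict (Set.Icc (0:ℝ) 1)), z ∈ Set.Icc (0:ℝ) 1 :=
      MeasureTheory.ae_restrict_mem measurableSet_Icc
    have hnot : ∀ᵐ z ∂(MeasureTheory.volume.restrict (Set.Icc (0:ℝ) 1)),
        z ∉ ({0, 1} : Set ℝ) := by
      rw [MeasureTheory.ae_iff]
      refine MeasureTheory.measure_mono_null (fun z hz => not_not.mp hz) ?_
      rw [MeasureTheory.Measure.restrict_apply ((measurableSet_singleton (1:ℝ)).insert 0)]
      refine MeasureTheory.measure_mono_null (Set.inter_subset_left) ?_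
      exact ((Set.finite_singleton (1:ℝ)).insert 0).measure_zero _
    filter_upwards [hmem, hnot] with z hz hz2
    refine hp z ⟨lt_of_le_of_ne hz.1 ?_, lt_of_le_of_ne hz.2 ?_⟩
    · exact fun h => hz2 (by simp [← h])
    · exact fun h => hz2 (by simp [h])
  -- first energy estimate
  have h1 : a + 2 * k ^ 2 * b + k ^ 4 * c ≤ R ^ 2 / 2 * t + k ^ 4 / 2 * c := by
    rw [keyRe]
    have hrhs_int : IntervalIntegrable
        (fun z => R ^ 2 / 2 * ‖θ z‖ ^ 2 + k ^ 4 / 2 * ‖w z‖ ^ 2) MeasureTheory.volume 0 1 :=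
      (hθint.const_mul _).add
        (Continuous.intervalIntegrable (continuous_const.mul ((hw.continuous.norm).pow 2)) 0 1)
    have hpt : ∀ z ∈ Set.Ioo (0:ℝ) 1, ((starRingEnd ℂ) (w z) *
          (iteratedDeriv 4 w z - 2 * (k:ℂ) ^ 2 * iteratedDeriv 2 w z + (k:ℂ) ^ 4 * w z)).re
          ≤ R ^ 2 / 2 * ‖θ z‖ ^ 2 + k ^ 4 / 2 * ‖w z‖ ^ 2 := by
      intro z hz
      rw [hode z hz]
      have h1 : ((starRingEnd ℂ) (w z) * ((R:ℂ) * (k:ℂ) ^ 2 * θ z)).re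
          ≤ ‖(starRingEnd ℂ) (w z) * ((R:ℂ) * (k:ℂ) ^ 2 * θ z)‖ := by
        exact Complex.re_le_norm _
      have h2 : ‖(starRingEnd ℂ) (w z) * ((R:ℂ) * (k:ℂ) ^ 2 * θ z)‖
          = ‖w z‖ * (R * k ^ 2 * ‖θ z‖) := by
        simp [norm_mul, abs_of_pos hR, abs_of_pos hk, mul_pow]
      have h3 : ‖w z‖ * (R * k ^ 2 * ‖θ z‖) ≤ R ^ 2 / 2 * ‖θ z‖ ^ 2 + k ^ 4 / 2 * ‖w z‖ ^ 2 := by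
        nlinarith [sq_nonneg (R * ‖θ z‖ - k ^ 2 * ‖w z‖), norm_nonneg (w z), norm_nonneg (θ z)]
      linarith [h1, h2 ▸ h1]
    have hmono := intervalIntegral.integral_mono_ae_restrict (by norm_num : (0:ℝ) ≤ 1)
      ((Complex.continuous_re.comp hcontL).intervalIntegrable 0 1)
      hrhs_int (hae hpt)
    calc _ ≤ ∫ z in (0:ℝ)..1, (R ^ 2 / 2 * ‖θ z‖ ^ 2 + k ^ 4 / 2 * ‖w z‖ ^ 2) := hmono
      _ = R ^ 2 / 2 * t + k ^ 4 / 2 * c := by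
          rw [intervalIntegral.integral_add (hθint.const_mul _)
            (Continuous.intervalIntegrable (show Continuous fun z => k ^ 4 / 2 * ‖w z‖ ^ 2 from continuous_const.mul ((hw.continuous.norm).pow 2)) 0 1),
            intervalIntegral.integral_const_mul, intervalIntegral.integral_const_mul,
            ← ht_def, ← hc_def]
  -- second estimate: pointwise bound on the fourth derivative
  have h2 : d ≤ 3 * R ^ 2 * k ^ 4 * t + (12 * k ^ 4 * a + 3 * k ^ 8 * c) := by
    have hrhs_int : IntervalIntegrable
        (fun z => 3 * R ^ 2 * k ^ 4 * ‖θ z‖ ^ 2 +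
          (12 * k ^ 4 * ‖iteratedDeriv 2 w z‖ ^ 2 + 3 * k ^ 8 * ‖w z‖ ^ 2))
        MeasureTheory.volume 0 1 :=
      (hθint.const_mul _).add (Continuous.intervalIntegrable
        (by exact ((continuous_const.mul (((hcont 2 (by norm_num)).norm).pow 2)).add
          (continuous_const.mul ((hw.continuous.norm).pow 2)))) 0 1)
    have hpt : ∀ z ∈ Set.Ioo (0:ℝ) 1, ‖iteratedDeriv 4 w z‖ ^ 2
          ≤ 3 * R ^ 2 * k ^ 4 * ‖θ z‖ ^ 2 +
            (12 * k ^ 4 * ‖iteratedDeriv 2 w z‖ ^ 2 + 3 * k ^ 8 * ‖w z‖ ^ 2) := by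
      intro z hz
      have hrw : iteratedDeriv 4 w z
          = (R:ℂ) * (k:ℂ) ^ 2 * θ z + 2 * (k:ℂ) ^ 2 * iteratedDeriv 2 w z - (k:ℂ) ^ 4 * w z := by
        have := hode z hz
        linear_combination this
      have n1 : ‖(R:ℂ) * (k:ℂ) ^ 2 * θ z‖ = R * k ^ 2 * ‖θ z‖ := by
        simp [norm_mul, norm_pow, abs_of_pos hR, abs_of_pos hk]
      have n2 : ‖2 * (k:ℂ) ^ 2 * iteratedDeriv 2 w z‖ = 2 * k ^ 2 * ‖iteratedDeriv 2 w z‖ := by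
        simp [norm_mul, norm_pow, abs_of_pos hk]
      have n3 : ‖(k:ℂ) ^ 4 * w z‖ = k ^ 4 * ‖w z‖ := by
        simp [norm_mul, norm_pow, abs_of_pos hk]
      have hb : ‖iteratedDeriv 4 w z‖
          ≤ R * k ^ 2 * ‖θ z‖ + 2 * k ^ 2 * ‖iteratedDeriv 2 w z‖ + k ^ 4 * ‖w z‖ := by
        rw [hrw]
        calc ‖(R:ℂ) * (k:ℂ) ^ 2 * θ z + 2 * (k:ℂ) ^ 2 * iteratedDeriv 2 w z - (k:ℂ) ^ 4 * w z‖
            ≤ ‖(R:ℂ) * (k:ℂ) ^ 2 * θ z + 2 * (k:ℂ) ^ 2 * iteratedDeriv 2 w z‖ + ‖(k:ℂ) ^ 4 * w z‖ :=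
              norm_sub_le _ _
          _ ≤ ‖(R:ℂ) * (k:ℂ) ^ 2 * θ z‖ + ‖2 * (k:ℂ) ^ 2 * iteratedDeriv 2 w z‖ + ‖(k:ℂ) ^ 4 * w z‖ := by
              linarith [norm_add_le ((R:ℂ) * (k:ℂ) ^ 2 * θ z) (2 * (k:ℂ) ^ 2 * iteratedDeriv 2 w z)]
          _ = R * k ^ 2 * ‖θ z‖ + 2 * k ^ 2 * ‖iteratedDeriv 2 w z‖ + k ^ 4 * ‖w z‖ := by
              rw [n1, n2, n3]
      nlinarith [norm_nonneg (iteratedDeriv 4 w z), norm_nonneg (θ z),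
        norm_nonneg (iteratedDeriv 2 w z), norm_nonneg (w z),
        sq_nonneg (R * k ^ 2 * ‖θ z‖ - 2 * k ^ 2 * ‖iteratedDeriv 2 w z‖),
        sq_nonneg (R * k ^ 2 * ‖θ z‖ - k ^ 4 * ‖w z‖),
        sq_nonneg (2 * k ^ 2 * ‖iteratedDeriv 2 w z‖ - k ^ 4 * ‖w z‖)]
    have hmono := intervalIntegral.integral_mono_ae_restrict (by norm_num : (0:ℝ) ≤ 1)
      (Continuous.intervalIntegrable (((hcont 4 le_rfl).norm).pow 2) 0 1)
      hrhs_int (hae hpt)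
    calc d = ∫ z in (0:ℝ)..1, ‖iteratedDeriv 4 w z‖ ^ 2 := hd_def
        _ ≤ _ := hmono
        _ = 3 * R ^ 2 * k ^ 4 * t + (12 * k ^ 4 * a + 3 * k ^ 8 * c) := by
            rw [intervalIntegral.integral_add (hθint.const_mul _)
                (Continuous.intervalIntegrable (by exact
                  ((continuous_const.mul (((hcont 2 (by norm_num)).norm).pow 2)).add
                    (continuous_const.mul ((hw.continuous.norm).pow 2)))) 0 1),
              intervalIntegral.integral_add
                (Continuous.intervalIntegrable
                  (show Continuous fun z => 12 * k ^ 4 * ‖iteratedDeriv 2 w z‖ ^ 2 from continuous_const.mul (((hcont 2 (by norm_num)).norm).pow 2)) 0 1)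
                (Continuous.intervalIntegrable
                  (show Continuous fun z => 3 * k ^ 8 * ‖w z‖ ^ 2 from continuous_const.mul ((hw.continuous.norm).pow 2)) 0 1),
              intervalIntegral.integral_const_mul, intervalIntegral.integral_const_mul,
              intervalIntegral.integral_const_mul, ← ht_def, ← ha_def, ← hc_def]
  -- final arithmetic
  have hk2 : (0:ℝ) < k ^ 2 := by positivity
  have nnb : (0:ℝ) ≤ 2 * k ^ 2 * b := by positivity
  have nnc : (0:ℝ) ≤ k ^ 4 * c := by positivity
  have ea : a ≤ R ^ 2 / 2 * t := by linarith
  have ec : k ^ 4 * c ≤ R ^ 2 * t := by linarith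
  have e2 : (1 / k ^ 2) * d ≤ 3 * R ^ 2 * k ^ 2 * t + (12 * k ^ 2 * a + 3 * k ^ 6 * c) := by
    rw [div_mul_eq_mul_div, one_mul, div_le_iff₀ hk2]
    calc d ≤ 3 * R ^ 2 * k ^ 4 * t + (12 * k ^ 4 * a + 3 * k ^ 8 * c) := h2
      _ = (3 * R ^ 2 * k ^ 2 * t + (12 * k ^ 2 * a + 3 * k ^ 6 * c)) * k ^ 2 := by ring
  have e3 : 12 * k ^ 2 * a ≤ 6 * R ^ 2 * k ^ 2 * t := by
    have h := mul_le_mul_of_nonneg_left ea (by positivity : (0:ℝ) ≤ 12 * k ^ 2)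
    have h2 : 12 * k ^ 2 * (R ^ 2 / 2 * t) = 6 * R ^ 2 * k ^ 2 * t := by ring
    linarith
  have e4 : 3 * k ^ 6 * c ≤ 3 * R ^ 2 * k ^ 2 * t := by
    have h := mul_le_mul_of_nonneg_left ec (by positivity : (0:ℝ) ≤ 3 * k ^ 2)
    have h2 : 3 * k ^ 2 * (k ^ 4 * c) = 3 * k ^ 6 * c := by ring
    have h3 : 3 * k ^ 2 * (R ^ 2 * t) = 3 * R ^ 2 * k ^ 2 * t := by ring
    linarith
  have efin : k ^ 2 * a ≤ 1 / 2 * R ^ 2 * k ^ 2 * t := by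
    have h := mul_le_mul_of_nonneg_left ea hk2.le
    have h2 : k ^ 2 * (R ^ 2 / 2 * t) = 1 / 2 * R ^ 2 * k ^ 2 * t := by ring
    linarith
  have hnn : (0:ℝ) ≤ R ^ 2 * k ^ 2 * t := by positivity
  linarith [efin, e2, e3, e4, hnn]
end

section
/- Let w,ζ:[0,1]→ℂ be C² with w=ζ=0 at z=0 and z=1, satisfying w''−k²w = kζ on (0,1) for some k>0. Then (8/9)‖w''‖²_{L²(0,1)} + (8/3)k²‖w'‖²_{L²(0,1)} ≤ k²‖ζ‖²_{L²(0,1)}. -/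
open intervalIntegral Real MeasureTheory

private lemma normsq_expand (a b : ℂ) :
    ‖a - b‖ ^ 2 = ‖a‖ ^ 2 + ‖b‖ ^ 2 - 2 * (a * (starRingEnd ℂ) b).re := by
  have h : ∀ z : ℂ, ‖z‖ ^ 2 = Complex.normSq z := fun z => by
    rw [Complex.sq_norm]
  rw [h, h, h, Complex.normSq_sub]

private lemma re_intervalIntegral (f : ℝ → ℂ) (hf : IntervalIntegrable f volume 0 1) :
    (∫ z in (0:ℝ)..1, f z).re = ∫ z in (0:ℝ)..1, (f z).re := by
  rw [intervalIntegral.integral_of_le (by norm_num : (0:ℝ) ≤ 1),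
      intervalIntegral.integral_of_le (by norm_num : (0:ℝ) ≤ 1)]
  simpa using (integral_re (μ := volume.restrict (Set.Ioc (0:ℝ) 1)) hf.1).symm

/-- Pseudo-vorticity energy estimate: if `w'' - k² w = k ζ` with `w, ζ` vanishing at the
endpoints, then `(8/9)‖w''‖² + (8/3)k²‖w'‖² ≤ k²‖ζ‖²`. -/
theorem stmt9 (w ζ : ℝ → ℂ) (hw : ContDiff ℝ 2 w) (hζ : ContDiff ℝ 2 ζ)
    (hw0 : w 0 = 0) (hw1 : w 1 = 0) (hζ0 : ζ 0 = 0) (hζ1 : ζ 1 = 0)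
    (k : ℝ) (hk : 0 < k)
    (hode : ∀ z ∈ Set.Ioo (0:ℝ) 1,
      iteratedDeriv 2 w z - (k:ℂ) ^ 2 * w z = (k:ℂ) * ζ z) :
    (8/9) * (∫ z in (0:ℝ)..1, ‖iteratedDeriv 2 w z‖ ^ 2)
      + (8/3) * k ^ 2 * (∫ z in (0:ℝ)..1, ‖deriv w z‖ ^ 2)
    ≤ k ^ 2 * ∫ z in (0:ℝ)..1, ‖ζ z‖ ^ 2 := by
  -- continuity facts
  have hwc : Continuous w := hw.continuous
  have hwd : Differentiable ℝ w := hw.differentiable two_ne_zero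
  have hd1 : ContDiff ℝ 1 (deriv w) :=
    ((contDiff_succ_iff_deriv (n := 1)).mp (by exact_mod_cast hw)).2.2
  have hw'c : Continuous (deriv w) := hd1.continuous
  have hw'd : Differentiable ℝ (deriv w) := hd1.differentiable one_ne_zero
  have hi2 : iteratedDeriv 2 w = deriv (deriv w) := by
    rw [iteratedDeriv_succ, iteratedDeriv_one]
  have hw''c : Continuous (iteratedDeriv 2 w) := by
    rw [hi2]; exact hd1.continuous_deriv le_rfl
  have hζc : Continuous ζ := hζ.continuous
  have hfc : Continuous fun z => iteratedDeriv 2 w z * (starRingEnd ℂ) (w z) :=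
    hw''c.mul (Complex.continuous_conj.comp hwc)
  have hgc : Continuous fun z => deriv w z * (starRingEnd ℂ) (deriv w z) :=
    hw'c.mul (Complex.continuous_conj.comp hw'c)
  set A := ∫ z in (0:ℝ)..1, ‖iteratedDeriv 2 w z‖ ^ 2 with hA
  set B := ∫ z in (0:ℝ)..1, ‖deriv w z‖ ^ 2 with hB
  set C := ∫ z in (0:ℝ)..1, ‖w z‖ ^ 2 with hC
  set X := ∫ z in (0:ℝ)..1, (iteratedDeriv 2 w z * (starRingEnd ℂ) (w z)).re with hX
  have intA : IntervalIntegrable (fun z => ‖iteratedDeriv 2 w z‖ ^ 2) volume 0 1 :=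
    ((hw''c.norm.pow 2)).intervalIntegrable 0 1
  have intB : IntervalIntegrable (fun z => ‖deriv w z‖ ^ 2) volume 0 1 :=
    ((hw'c.norm.pow 2)).intervalIntegrable 0 1
  have intC : IntervalIntegrable (fun z => ‖w z‖ ^ 2) volume 0 1 :=
    ((hwc.norm.pow 2)).intervalIntegrable 0 1
  have intX : IntervalIntegrable
      (fun z => (iteratedDeriv 2 w z * (starRingEnd ℂ) (w z)).re) volume 0 1 :=
    (Complex.continuous_re.comp hfc).intervalIntegrable 0 1
  -- Step 1: energy identity  k² ∫‖ζ‖² = A + k⁴ C - 2 k² X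
  have hE : k ^ 2 * (∫ z in (0:ℝ)..1, ‖ζ z‖ ^ 2) = A + k ^ 4 * C - 2 * k ^ 2 * X := by
    have h1 : (∫ z in (0:ℝ)..1, k ^ 2 * ‖ζ z‖ ^ 2)
        = ∫ z in (0:ℝ)..1, ‖iteratedDeriv 2 w z - (k:ℂ) ^ 2 * w z‖ ^ 2 := by
      apply intervalIntegral.integral_congr_ae
      have h01 : Set.uIoc (0:ℝ) 1 = Set.Ioc 0 1 := by
        rw [Set.uIoc_of_le (by norm_num)]
      have hae : ∀ᵐ z : ℝ, z ≠ 1 := by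
        refine (MeasureTheory.ae_iff).mpr ?_
        simp [Set.setOf_eq_eq_singleton]
      filter_upwards [hae] with z hz hzin
      rw [h01] at hzin
      have hzo : z ∈ Set.Ioo (0:ℝ) 1 := ⟨hzin.1, lt_of_le_of_ne hzin.2 hz⟩
      rw [hode z hzo, norm_mul]
      simp [Complex.norm_real, Real.norm_eq_abs, abs_of_pos hk, mul_pow]
    rw [intervalIntegral.integral_const_mul] at h1
    rw [h1]
    have h2 : ∀ z : ℝ, ‖iteratedDeriv 2 w z - (k:ℂ) ^ 2 * w z‖ ^ 2
        = ‖iteratedDeriv 2 w z‖ ^ 2 + k ^ 4 * ‖w z‖ ^ 2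
          - 2 * k ^ 2 * (iteratedDeriv 2 w z * (starRingEnd ℂ) (w z)).re := by
      intro z
      rw [normsq_expand]
      have hconj : ((starRingEnd ℂ)) ((k:ℂ) ^ 2 * w z) = (k:ℂ) ^ 2 * (starRingEnd ℂ) (w z) := by
        simp [map_mul, Complex.conj_ofReal]
      rw [norm_mul, hconj]
      have hre : (iteratedDeriv 2 w z * ((k:ℂ) ^ 2 * (starRingEnd ℂ) (w z))).re
          = k ^ 2 * (iteratedDeriv 2 w z * (starRingEnd ℂ) (w z)).re := by
        rw [show iteratedDeriv 2 w z * ((k:ℂ) ^ 2 * (starRingEnd ℂ) (w z))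
            = (((k ^ 2 : ℝ)) : ℂ) * (iteratedDeriv 2 w z * (starRingEnd ℂ) (w z)) by push_cast; ring]
        rw [Complex.re_ofReal_mul]
      rw [hre]
      have hn : ‖((k:ℂ) ^ 2)‖ = k ^ 2 := by
        simp [sq_abs]
      rw [hn]
      ring
    rw [intervalIntegral.integral_congr (fun z _ => h2 z)]
    rw [intervalIntegral.integral_sub ((intA.add (intC.const_mul _))) (intX.const_mul _),
        intervalIntegral.integral_add intA (intC.const_mul _),
        intervalIntegral.integral_const_mul, intervalIntegral.integral_const_mul]
  -- Step 2: integration by parts: X = -B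
  have hXB : X = -B := by
    have hIBP : (∫ z in (0:ℝ)..1,
        iteratedDeriv 2 w z * (starRingEnd ℂ) (w z)
          + deriv w z * (starRingEnd ℂ) (deriv w z))
        = deriv w 1 * (starRingEnd ℂ) (w 1) - deriv w 0 * (starRingEnd ℂ) (w 0) := by
      apply intervalIntegral.integral_deriv_mul_eq_sub
        (u := deriv w) (v := fun z => (starRingEnd ℂ) (w z))
      · intro x _
        have h := (hw'd x).hasDerivAt
        rw [hi2]; exact h
      · intro x _
        exact ((hwd x).hasDerivAt).star
      · exact hw''c.intervalIntegrable 0 1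
      · exact (Complex.continuous_conj.comp hw'c).intervalIntegrable 0 1
    rw [hw0, hw1] at hIBP
    simp only [map_zero, mul_zero, sub_zero] at hIBP
    have hsplit : (∫ z in (0:ℝ)..1, iteratedDeriv 2 w z * (starRingEnd ℂ) (w z))
        + (∫ z in (0:ℝ)..1, deriv w z * (starRingEnd ℂ) (deriv w z)) = 0 := by
      rw [← intervalIntegral.integral_add (hfc.intervalIntegrable 0 1)
        (hgc.intervalIntegrable 0 1)]
      exact hIBP
    have h2 : (∫ z in (0:ℝ)..1, deriv w z * (starRingEnd ℂ) (deriv w z)) = ((B : ℝ) : ℂ) := by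
      rw [hB, ← intervalIntegral.integral_ofReal]
      apply intervalIntegral.integral_congr
      intro z _
      simp [Complex.mul_conj, Complex.normSq_eq_norm_sq]
    have h3 : (∫ z in (0:ℝ)..1, iteratedDeriv 2 w z * (starRingEnd ℂ) (w z)) = -((B:ℝ):ℂ) := by
      rw [h2] at hsplit; linear_combination hsplit
    have h4 := congrArg Complex.re h3
    rw [re_intervalIntegral _ (hfc.intervalIntegrable 0 1)] at h4
    simpa [hX] using h4
  -- Step 3: Young's inequality pointwise
  have hYoung : -(2/3) * k ^ 2 * X ≤ (1/9) * A + k ^ 4 * C := by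
    have hpt : ∀ z ∈ Set.Icc (0:ℝ) 1,
        (-(2/3) * k ^ 2) * (iteratedDeriv 2 w z * (starRingEnd ℂ) (w z)).re
          ≤ (1/9) * ‖iteratedDeriv 2 w z‖ ^ 2 + k ^ 4 * ‖w z‖ ^ 2 := by
      intro z _
      set a := iteratedDeriv 2 w z
      set b := w z
      have h1 : -(a * (starRingEnd ℂ) b).re ≤ ‖a‖ * ‖b‖ := by
        have := Complex.abs_re_le_norm (a * (starRingEnd ℂ) b)
        have h2 : ‖a * (starRingEnd ℂ) b‖ = ‖a‖ * ‖b‖ := by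
          rw [norm_mul]; simp
        cases' abs_le.mp this with hl hr
        nlinarith [hl, h2]
      have ha : (0:ℝ) ≤ ‖a‖ := norm_nonneg _
      have hb : (0:ℝ) ≤ ‖b‖ := norm_nonneg _
      nlinarith [sq_nonneg ((1/3) * ‖a‖ - k ^ 2 * ‖b‖), sq_nonneg k, mul_pos hk hk, h1]
    have hmono := intervalIntegral.integral_mono_on (by norm_num : (0:ℝ) ≤ 1)
      (intX.const_mul (-(2/3) * k ^ 2))
      ((intA.const_mul (1/9)).add (intC.const_mul (k ^ 4))) hpt
    rw [intervalIntegral.integral_const_mul,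
        intervalIntegral.integral_add (intA.const_mul (1/9)) (intC.const_mul (k ^ 4)),
        intervalIntegral.integral_const_mul, intervalIntegral.integral_const_mul] at hmono
    simpa [hA, hC, hX] using hmono
  rw [hXB] at hE hYoung
  linarith [hE, hYoung]
end

section
/- Let w∈C²([0,1];ℂ) with w(0)=w(1)=0 satisfy w''−k²w = kζ for some k>0 and ζ∈L²(0,1). Then for every z∈[0,1], |w(z)| ≤ C·k^{1/2}·z·‖ζ‖_{L²(0,1)} for a universal constant C. -/
open intervalIntegral Real MeasureTheory

/-- Cauchy–Schwarz for interval integrals of continuous functions on `[0,1]`. -/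
lemma cs01 {f g : ℝ → ℝ} (hf : Continuous f) (hg : Continuous g) :
    (∫ t in (0:ℝ)..1, f t * g t) ≤
      Real.sqrt (∫ t in (0:ℝ)..1, f t ^ 2) * Real.sqrt (∫ t in (0:ℝ)..1, g t ^ 2) := by
  set F := ∫ t in (0:ℝ)..1, f t ^ 2 with hF
  set G := ∫ t in (0:ℝ)..1, g t ^ 2 with hG
  have hF0 : 0 ≤ F := intervalIntegral.integral_nonneg (by norm_num) (fun x _ => sq_nonneg _)
  have hG0 : 0 ≤ G := intervalIntegral.integral_nonneg (by norm_num) (fun x _ => sq_nonneg _)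
  have key : ∀ l : ℝ, 0 < l → (∫ t in (0:ℝ)..1, f t * g t) ≤ l / 2 * F + 1 / (2 * l) * G := by
    intro l hl
    have hptwise : ∀ x ∈ Set.Icc (0:ℝ) 1, f x * g x ≤ l / 2 * f x ^ 2 + 1 / (2 * l) * g x ^ 2 := by
      intro x _
      have h2l : (0:ℝ) < 2 * l := by linarith
      have e1 : l / 2 * f x ^ 2 + 1 / (2 * l) * g x ^ 2
          = (l ^ 2 * f x ^ 2 + g x ^ 2) / (2 * l) := by field_simp
      rw [e1, le_div_iff₀ h2l]
      nlinarith [sq_nonneg (l * f x - g x)]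
    calc (∫ t in (0:ℝ)..1, f t * g t)
        ≤ ∫ t in (0:ℝ)..1, (l / 2 * f t ^ 2 + 1 / (2 * l) * g t ^ 2) := by
          refine intervalIntegral.integral_mono_on (by norm_num) ((hf.mul hg).intervalIntegrable _ _)
            (((continuous_const.mul (hf.pow 2)).add (continuous_const.mul (hg.pow 2))).intervalIntegrable _ _) hptwise
      _ = l / 2 * F + 1 / (2 * l) * G := by
          rw [intervalIntegral.integral_add (f := fun t => l / 2 * f t ^ 2) (g := fun t => 1 / (2 * l) * g t ^ 2) ((continuous_const.mul (hf.pow 2)).intervalIntegrable _ _)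
            ((continuous_const.mul (hg.pow 2)).intervalIntegrable _ _),
            intervalIntegral.integral_const_mul, intervalIntegral.integral_const_mul]
  have heps : ∀ ε : ℝ, 0 < ε →
      (∫ t in (0:ℝ)..1, f t * g t) ≤ Real.sqrt (F + ε) * Real.sqrt (G + ε) := by
    intro ε hε
    have hFε : 0 < F + ε := by linarith
    have hGε : 0 < G + ε := by linarith
    have hl : 0 < Real.sqrt ((G + ε) / (F + ε)) := Real.sqrt_pos.mpr (by positivity)
    refine (key _ hl).trans ?_
    set l := Real.sqrt ((G + ε) / (F + ε)) with hldef
    have hsF : Real.sqrt (F + ε) ^ 2 = F + ε := Real.sq_sqrt hFε.le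
    have hsG : Real.sqrt (G + ε) ^ 2 = G + ε := Real.sq_sqrt hGε.le
    have hsFpos : 0 < Real.sqrt (F + ε) := Real.sqrt_pos.mpr hFε
    have hsGpos : 0 < Real.sqrt (G + ε) := Real.sqrt_pos.mpr hGε
    have hldef2 : l = Real.sqrt (G + ε) / Real.sqrt (F + ε) := by
      rw [hldef, Real.sqrt_div hGε.le]
    have h1 : l * (F + ε) = Real.sqrt (F + ε) * Real.sqrt (G + ε) := by
      rw [hldef2, div_mul_eq_mul_div, eq_comm, eq_div_iff hsFpos.ne']
      linear_combination (Real.sqrt (G + ε)) * hsF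
    have h2 : (G + ε) / l = Real.sqrt (F + ε) * Real.sqrt (G + ε) := by
      rw [hldef2, div_div_eq_mul_div, eq_comm, eq_div_iff hsGpos.ne']
      linear_combination (Real.sqrt (F + ε)) * hsG
    have hmono : l / 2 * F + 1 / (2 * l) * G ≤ l / 2 * (F + ε) + 1 / (2 * l) * (G + ε) := by
      have ha : (0:ℝ) ≤ 1 / (2 * l) := by positivity
      have hb : (0:ℝ) ≤ l / 2 := by positivity
      nlinarith [mul_nonneg ha hε.le, mul_nonneg hb hε.le]
    refine hmono.trans ?_
    have heq2 : l / 2 * (F + ε) + 1 / (2 * l) * (G + ε) =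
        (l * (F + ε) + (G + ε) / l) / 2 := by field_simp
    rw [heq2, h1, h2]
    linarith
  have htend : Filter.Tendsto (fun ε : ℝ => Real.sqrt (F + ε) * Real.sqrt (G + ε))
      (nhdsWithin 0 (Set.Ioi 0)) (nhds (Real.sqrt F * Real.sqrt G)) := by
    have hc : Continuous (fun ε : ℝ => Real.sqrt (F + ε) * Real.sqrt (G + ε)) := by
      continuity
    have := hc.tendsto 0
    simp only [add_zero] at this
    exact this.mono_left nhdsWithin_le_nhds
  refine ge_of_tendsto htend ?_
  filter_upwards [self_mem_nhdsWithin] with ε hε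
  exact heps ε hε

/-- An integral of a nonnegative continuous function over a subinterval of `[0,1]` is at most
the integral over `[0,1]`. -/
lemma abs_int_sub {c x : ℝ} (hc : c ∈ Set.Icc (0:ℝ) 1) (hx : x ∈ Set.Icc (0:ℝ) 1)
    {f : ℝ → ℝ} (hf : Continuous f) (hf0 : ∀ t, 0 ≤ f t) :
    |∫ t in c..x, f t| ≤ ∫ t in (0:ℝ)..1, f t := by
  refine (intervalIntegral.abs_integral_mono_interval (c:=0) (d:=1) ?_
      (Filter.Eventually.of_forall hf0) (hf.intervalIntegrable _ _)).trans ?_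
  · refine Set.uIoc_subset_uIoc_of_uIcc_subset_uIcc ?_
    have h01 : Set.uIcc (0:ℝ) 1 = Set.Icc 0 1 := Set.uIcc_of_le (by norm_num)
    rw [h01]
    exact Set.uIcc_subset_Icc hc hx
  · rw [abs_of_nonneg (intervalIntegral.integral_nonneg (by norm_num) fun t _ => hf0 t)]

lemma mul_star_eq (z : ℂ) : z * star z = ((‖z‖^2 : ℝ) : ℂ) := by
  rw [show (star z) = (starRingEnd ℂ) z from rfl, Complex.mul_conj]
  norm_cast
  simp [Complex.normSq_eq_norm_sq]

set_option maxHeartbeats 2000000 in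
/-- Pseudo-vorticity pointwise estimate: `|w(z)| ≤ C √k z ‖ζ‖_{L²(0,1)}`. -/
theorem stmt10 :
    ∃ C : ℝ, 0 < C ∧
      ∀ (w ζ : ℝ → ℂ), ContDiff ℝ 2 w → w 0 = 0 → w 1 = 0 →
        ∀ (k : ℝ), 0 < k →
        (∀ z ∈ Set.Ioo (0:ℝ) 1,
          iteratedDeriv 2 w z - (k:ℂ) ^ 2 * w z = (k:ℂ) * ζ z) →
        IntervalIntegrable (fun z => ‖ζ z‖ ^ 2) MeasureTheory.volume 0 1 →
        ∀ z ∈ Set.Icc (0:ℝ) 1,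
          ‖w z‖ ≤ C * Real.sqrt k * z * Real.sqrt (∫ t in (0:ℝ)..1, ‖ζ t‖ ^ 2) := by
  refine ⟨3, by norm_num, ?_⟩
  intro w ζ hw hw0 hw1 k hk heq hζint z hz
  -- basic regularity
  have h2 : ContDiff ℝ ((1:WithTop ℕ∞) + 1) w := by norm_num; exact hw
  obtain ⟨hwd, -, hwc1⟩ := contDiff_succ_iff_deriv.mp h2
  set w₁ : ℝ → ℂ := deriv w with hw₁def
  obtain ⟨hw₁d, hw₂c⟩ := contDiff_one_iff_deriv.mp hwc1
  set w₂ : ℝ → ℂ := deriv w₁ with hw₂def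
  have hwc : Continuous w := hwd.continuous
  have hw₁c : Continuous w₁ := hw₁d.continuous
  have hkC : (k:ℂ) ≠ 0 := by exact_mod_cast hk.ne'
  have hknorm : ‖(k:ℂ)‖ = k := by
    simp [Complex.norm_real, abs_of_pos hk]
  -- the continuous version of ζ
  set g : ℝ → ℂ := fun t => (k:ℂ)⁻¹ * (w₂ t - (k:ℂ)^2 * w t) with hgdef
  have hgc : Continuous g := continuous_const.mul (hw₂c.sub (continuous_const.mul hwc))
  have heqg : ∀ t, w₂ t = (k:ℂ)^2 * w t + (k:ℂ) * g t := by
    intro t; rw [hgdef]; field_simp; ring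
  have hζg : ∀ t ∈ Set.Ioo (0:ℝ) 1, ζ t = g t := by
    intro t ht
    have h := heq t ht
    rw [iteratedDeriv_succ, iteratedDeriv_succ, iteratedDeriv_zero] at h
    rw [hgdef]
    simp only
    rw [← hw₁def, ← hw₂def] at h
    rw [h]
    field_simp
  -- norms
  set a : ℝ → ℝ := fun t => ‖w t‖ with hadef
  set b : ℝ → ℝ := fun t => ‖w₁ t‖ with hbdef
  set d : ℝ → ℝ := fun t => ‖w₂ t‖ with hddef
  set e : ℝ → ℝ := fun t => ‖g t‖ with hedef
  have hac : Continuous a := hwc.norm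
  have hbc : Continuous b := hw₁c.norm
  have hdc : Continuous d := hw₂c.norm
  have hec : Continuous e := hgc.norm
  set A := ∫ t in (0:ℝ)..1, a t ^ 2 with hAdef
  set B := ∫ t in (0:ℝ)..1, b t ^ 2 with hBdef
  set D := ∫ t in (0:ℝ)..1, d t ^ 2 with hDdef
  set E := ∫ t in (0:ℝ)..1, e t ^ 2 with hEdef
  have hA0 : 0 ≤ A := intervalIntegral.integral_nonneg (by norm_num) (fun x _ => sq_nonneg _)
  have hB0 : 0 ≤ B := intervalIntegral.integral_nonneg (by norm_num) (fun x _ => sq_nonneg _)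
  have hD0 : 0 ≤ D := intervalIntegral.integral_nonneg (by norm_num) (fun x _ => sq_nonneg _)
  have hE0 : 0 ≤ E := intervalIntegral.integral_nonneg (by norm_num) (fun x _ => sq_nonneg _)
  -- the ζ-integral equals E
  have hζE : (∫ t in (0:ℝ)..1, ‖ζ t‖ ^ 2) = E := by
    rw [hEdef]
    apply intervalIntegral.integral_congr_ae
    have h1 : ∀ᵐ t : ℝ, t ∉ ({1} : Set ℝ) := (Set.countable_singleton (1:ℝ)).ae_notMem volume
    filter_upwards [h1] with t ht hmem
    rw [Set.uIoc_of_le (by norm_num : (0:ℝ) ≤ 1)] at hmem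
    have ht1 : t ≠ 1 := by simpa using ht
    have : t ∈ Set.Ioo (0:ℝ) 1 := ⟨hmem.1, lt_of_le_of_ne hmem.2 ht1⟩
    rw [hζg t this]
  -- FTC for w
  have hwFTC : ∀ s : ℝ, w s = ∫ t in (0:ℝ)..s, w₁ t := by
    intro s
    rw [intervalIntegral.integral_eq_sub_of_hasDerivAt (fun t _ => (hwd t).hasDerivAt)
      (hw₁c.intervalIntegrable _ _), hw0, sub_zero]
  -- Poincaré : pointwise bound by √B
  have hsqrtB : ∀ x ∈ Set.Icc (0:ℝ) 1, a x ≤ Real.sqrt B := by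
    intro x hx
    have h1 : a x = ‖∫ t in (0:ℝ)..x, w₁ t‖ := by rw [hadef]; simp only; rw [hwFTC x]
    have h2 : ‖∫ t in (0:ℝ)..x, w₁ t‖ ≤ |∫ t in (0:ℝ)..x, b t| :=
      intervalIntegral.norm_integral_le_abs_integral_norm
    have h3 : |∫ t in (0:ℝ)..x, b t| ≤ ∫ t in (0:ℝ)..1, b t :=
      abs_int_sub (by norm_num) hx hbc (fun t => norm_nonneg _)
    have h4 : (∫ t in (0:ℝ)..1, b t) ≤ Real.sqrt B * Real.sqrt (∫ t in (0:ℝ)..1, (1:ℝ)^2) := by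
      have := cs01 hbc continuous_const (g := fun _ => (1:ℝ))
      simpa using this
    rw [h1]
    refine (h2.trans (h3.trans ?_))
    simpa using h4
  -- A ≤ B
  have hAB : A ≤ B := by
    rw [hAdef]
    have : (∫ t in (0:ℝ)..1, B) = B := by simp
    rw [← this]
    refine intervalIntegral.integral_mono_on (by norm_num) ((hac.pow 2).intervalIntegrable _ _)
      (intervalIntegrable_const) ?_
    intro x hx
    have h := hsqrtB x hx
    have := Real.sqrt_nonneg B
    nlinarith [norm_nonneg (w x), Real.sq_sqrt hB0]
  -- energy identity
  have hint1 : (∫ t in (0:ℝ)..1, (w₂ t * star (w t) + w₁ t * star (w₁ t))) = 0 := by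
    rw [intervalIntegral.integral_eq_sub_of_hasDerivAt
      (f := fun s => w₁ s * star (w s))
      (fun t _ => ((hw₁d t).hasDerivAt.mul ((hwd t).hasDerivAt.star)))
      (((hw₂c.mul (hwc.star)).add (hw₁c.mul (hw₁c.star))).intervalIntegrable _ _)]
    rw [hw0, hw1]
    simp
  have hBint : (∫ t in (0:ℝ)..1, w₁ t * star (w₁ t)) = ((B:ℝ) : ℂ) := by
    have : ∀ t, w₁ t * star (w₁ t) = ((b t ^ 2 : ℝ) : ℂ) := fun t => mul_star_eq _
    rw [intervalIntegral.integral_congr (fun t _ => this t), hBdef,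
      intervalIntegral.integral_ofReal]
  have hAint : (∫ t in (0:ℝ)..1, w t * star (w t)) = ((A:ℝ) : ℂ) := by
    have : ∀ t, w t * star (w t) = ((a t ^ 2 : ℝ) : ℂ) := fun t => mul_star_eq _
    rw [intervalIntegral.integral_congr (fun t _ => this t), hAdef,
      intervalIntegral.integral_ofReal]
  set I := ∫ t in (0:ℝ)..1, g t * star (w t) with hIdef
  have hsplit : (k:ℂ)^2 * ((A:ℝ):ℂ) + (k:ℂ) * I + ((B:ℝ):ℂ) = 0 := by
    have h1 : (∫ t in (0:ℝ)..1, w₂ t * star (w t))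
        = (k:ℂ)^2 * ((A:ℝ):ℂ) + (k:ℂ) * I := by
      have : ∀ t, w₂ t * star (w t)
          = (k:ℂ)^2 * (w t * star (w t)) + (k:ℂ) * (g t * star (w t)) := by
        intro t; rw [heqg t]; ring
      rw [intervalIntegral.integral_congr (fun t _ => this t),
        intervalIntegral.integral_add (f := fun t => (k:ℂ)^2 * (w t * star (w t))) (g := fun t => (k:ℂ) * (g t * star (w t)))
          ((continuous_const.mul (hwc.mul hwc.star)).intervalIntegrable _ _)
          ((continuous_const.mul (hgc.mul hwc.star)).intervalIntegrable _ _),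
        intervalIntegral.integral_const_mul, intervalIntegral.integral_const_mul,
        hAint, hIdef]
    rw [intervalIntegral.integral_add (f := fun t => w₂ t * star (w t)) (g := fun t => w₁ t * star (w₁ t)) ((hw₂c.mul hwc.star).intervalIntegrable _ _)
      ((hw₁c.mul hw₁c.star).intervalIntegrable _ _), h1, hBint] at hint1
    linear_combination hint1
  -- the main energy inequality
  have hEB : k^2 * A + B ≤ k * (Real.sqrt E * Real.sqrt A) := by
    have hIval : (k:ℂ) * I = -(((k^2 * A + B : ℝ)) : ℂ) := by
      push_cast
      linear_combination hsplit
    have hnormI : ‖(k:ℂ) * I‖ = k^2 * A + B := by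
      rw [hIval, norm_neg, Complex.norm_real, Real.norm_eq_abs, abs_of_nonneg (by positivity)]
    have hnormgw : ∀ t, ‖g t * star (w t)‖ = e t * a t := by
      intro t; rw [norm_mul, norm_star]
    have hI1 : ‖I‖ ≤ |∫ t in (0:ℝ)..1, e t * a t| := by
      have h := intervalIntegral.norm_integral_le_abs_integral_norm
        (f := fun t => g t * star (w t)) (a := 0) (b := 1) (μ := volume)
      rw [hIdef]
      refine h.trans ?_
      rw [intervalIntegral.integral_congr (fun t _ => hnormgw t)]
    have hI2 : |∫ t in (0:ℝ)..1, e t * a t| = ∫ t in (0:ℝ)..1, e t * a t :=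
      abs_of_nonneg (intervalIntegral.integral_nonneg (by norm_num)
        fun t _ => mul_nonneg (norm_nonneg _) (norm_nonneg _))
    have hI3 : (∫ t in (0:ℝ)..1, e t * a t) ≤ Real.sqrt E * Real.sqrt A := cs01 hec hac
    calc k^2 * A + B = ‖(k:ℂ) * I‖ := hnormI.symm
      _ = k * ‖I‖ := by rw [norm_mul, hknorm]
      _ ≤ k * (Real.sqrt E * Real.sqrt A) := by
          refine mul_le_mul_of_nonneg_left ?_ hk.le
          exact hI1.trans (by rw [hI2]; exact hI3)
  -- square roots
  set sA := Real.sqrt A with hsAdef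
  set sB := Real.sqrt B with hsBdef
  set sD := Real.sqrt D with hsDdef
  set sE := Real.sqrt E with hsEdef
  have hsA : sA ^ 2 = A := Real.sq_sqrt hA0
  have hsB : sB ^ 2 = B := Real.sq_sqrt hB0
  have hsD : sD ^ 2 = D := Real.sq_sqrt hD0
  have hsE : sE ^ 2 = E := Real.sq_sqrt hE0
  have hsA0 : 0 ≤ sA := Real.sqrt_nonneg _
  have hsB0 : 0 ≤ sB := Real.sqrt_nonneg _
  have hsD0 : 0 ≤ sD := Real.sqrt_nonneg _
  have hsE0 : 0 ≤ sE := Real.sqrt_nonneg _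
  have hsAB : sA ≤ sB := Real.sqrt_le_sqrt hAB
  have hsDval : sD = Real.sqrt D := hsDdef
  have hsEval : sE = Real.sqrt E := hsEdef
  clear_value A B D E sA sB sD sE
  -- k sA ≤ sE
  have hkA : k * sA ≤ sE := by
    nlinarith [hEB, mul_nonneg hk.le hsA0, sq_nonneg (k * sA - sE)]
  -- sB ≤ sE
  have hBE : sB ≤ sE := by
    nlinarith [hEB, mul_nonneg hk.le hsA0, sq_nonneg (sB - sE), mul_le_mul_of_nonneg_left hkA hsE0]
  -- sB ≤ k sE
  have hBkE : sB ≤ k * sE := by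
    have h1 : sB ^ 2 ≤ k * (sE * sB) := by
      have : k * (sE * sA) ≤ k * (sE * sB) := by
        refine mul_le_mul_of_nonneg_left (mul_le_mul_of_nonneg_left hsAB hsE0) hk.le
      nlinarith [hEB]
    rcases eq_or_lt_of_le hsB0 with h0 | h0
    · rw [← h0]; exact mul_nonneg hk.le hsE0
    · have h2 : sB * sB ≤ (k * sE) * sB := by nlinarith [h1]
      exact le_of_mul_le_mul_right h2 h0
  -- D ≤ 4 k² E
  have hDbound : D ≤ 4 * k ^ 2 * E := by
    have hptwise : ∀ x ∈ Set.Icc (0:ℝ) 1,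
        d x ^ 2 ≤ 2 * k ^ 4 * a x ^ 2 + 2 * k ^ 2 * e x ^ 2 := by
      intro x _
      have h1 : d x ≤ k ^ 2 * a x + k * e x := by
        rw [hddef]
        simp only
        rw [heqg x]
        refine (norm_add_le _ _).trans ?_
        rw [norm_mul, norm_mul, norm_pow, hknorm]
      have ha0 : 0 ≤ a x := norm_nonneg _
      have he0 : 0 ≤ e x := norm_nonneg _
      have hd0 : 0 ≤ d x := norm_nonneg _
      nlinarith [sq_nonneg (k ^ 2 * a x - k * e x)]
    have h2 : D ≤ ∫ t in (0:ℝ)..1, (2 * k ^ 4 * a t ^ 2 + 2 * k ^ 2 * e t ^ 2) := by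
      rw [hDdef]
      exact intervalIntegral.integral_mono_on (by norm_num)
        ((hdc.pow 2).intervalIntegrable _ _)
        (((continuous_const.mul (hac.pow 2)).add
          (continuous_const.mul (hec.pow 2))).intervalIntegrable _ _) hptwise
    have h3 : (∫ t in (0:ℝ)..1, (2 * k ^ 4 * a t ^ 2 + 2 * k ^ 2 * e t ^ 2))
        = 2 * k ^ 4 * A + 2 * k ^ 2 * E := by
      rw [intervalIntegral.integral_add (f := fun t => 2 * k ^ 4 * a t ^ 2) (g := fun t => 2 * k ^ 2 * e t ^ 2) ((continuous_const.mul (hac.pow 2)).intervalIntegrable _ _)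
        ((continuous_const.mul (hec.pow 2)).intervalIntegrable _ _),
        intervalIntegral.integral_const_mul, intervalIntegral.integral_const_mul,
        ← hAdef, ← hEdef]
    have h4 : k ^ 2 * A ≤ E := by nlinarith [hkA, mul_nonneg hk.le hsA0]
    nlinarith [h2, h3, h4, sq_nonneg k]
  have hsDbound : sD ≤ 2 * k * sE := by
    have h1 : 4 * k ^ 2 * E = (2 * k * sE) ^ 2 := by
      rw [mul_pow, mul_pow, hsE]; ring
    rw [hsDval]
    calc Real.sqrt D ≤ Real.sqrt ((2 * k * sE) ^ 2) := by
          rw [← h1]; exact Real.sqrt_le_sqrt hDbound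
      _ = 2 * k * sE := Real.sqrt_sq (by positivity)
  -- pointwise derivative bound
  set ψ : ℝ → ℝ := fun t => (w₁ t * star (w₁ t)).re with hψdef
  set ψ' : ℝ → ℝ := fun t => (w₂ t * star (w₁ t) + w₁ t * star (w₂ t)).re with hψ'def
  have hψb : ∀ t, ψ t = b t ^ 2 := by
    intro t; rw [hψdef]; simp only [mul_star_eq, Complex.ofReal_re]; rfl
  have hψd : ∀ t : ℝ, HasDerivAt ψ (ψ' t) t := by
    intro t
    exact Complex.reCLM.hasFDerivAt.comp_hasDerivAt t
      ((hw₁d t).hasDerivAt.mul ((hw₁d t).hasDerivAt.star))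
  have hψc : Continuous ψ := Complex.continuous_re.comp (hw₁c.mul hw₁c.star)
  have hψ'c : Continuous ψ' :=
    Complex.continuous_re.comp ((hw₂c.mul hw₁c.star).add (hw₁c.mul hw₂c.star))
  have hψ'le : ∀ t, |ψ' t| ≤ 2 * (d t * b t) := by
    intro t
    rw [hψ'def]
    simp only
    refine (Complex.abs_re_le_norm _).trans ?_
    refine (norm_add_le _ _).trans ?_
    rw [norm_mul, norm_mul, norm_star, norm_star]
    have : (‖w₂ t‖ : ℝ) * ‖w₁ t‖ = d t * b t := rfl
    have h2 : (‖w₁ t‖ : ℝ) * ‖w₂ t‖ = d t * b t := by rw [mul_comm]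
    linarith [this, h2, mul_nonneg (norm_nonneg (w₂ t)) (norm_nonneg (w₁ t))]
  obtain ⟨c, hcmem, hcmin⟩ := isCompact_Icc.exists_isMinOn (Set.nonempty_Icc.mpr zero_le_one)
    hψc.continuousOn
  have hψcB : ψ c ≤ B := by
    have h1 : (∫ _t in (0:ℝ)..1, ψ c) ≤ ∫ t in (0:ℝ)..1, b t ^ 2 := by
      refine intervalIntegral.integral_mono_on (by norm_num) intervalIntegrable_const
        ((hbc.pow 2).intervalIntegrable _ _) ?_
      intro x hx
      rw [← hψb x]
      exact hcmin hx
    rw [hBdef]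
    simpa using h1
  have hφbound : ∀ x ∈ Set.Icc (0:ℝ) 1, b x ^ 2 ≤ 5 * k * E := by
    intro x hx
    have hftc : ψ x - ψ c = ∫ t in c..x, ψ' t :=
      (intervalIntegral.integral_eq_sub_of_hasDerivAt (fun t _ => hψd t)
        (hψ'c.intervalIntegrable _ _)).symm
    have habs1 : |∫ t in c..x, ψ' t| ≤ |∫ t in c..x, abs (ψ' t)| := by
      simpa [Real.norm_eq_abs] using
        intervalIntegral.norm_integral_le_abs_integral_norm
          (f := ψ') (a := c) (b := x) (μ := volume)
    have habs2 : |∫ t in c..x, abs (ψ' t)| ≤ ∫ t in (0:ℝ)..1, abs (ψ' t) :=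
      abs_int_sub hcmem hx (hψ'c.abs) (fun t => abs_nonneg _)
    have habs3 : (∫ t in (0:ℝ)..1, abs (ψ' t)) ≤ ∫ t in (0:ℝ)..1, 2 * (d t * b t) := by
      refine intervalIntegral.integral_mono_on (by norm_num)
        (hψ'c.abs.intervalIntegrable _ _)
        ((continuous_const.mul (hdc.mul hbc)).intervalIntegrable _ _) ?_
      intro t _
      exact hψ'le t
    have habs4 : (∫ t in (0:ℝ)..1, 2 * (d t * b t)) ≤ 2 * (sD * sB) := by
      rw [intervalIntegral.integral_const_mul]
      refine mul_le_mul_of_nonneg_left ?_ (by norm_num)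
      rw [hsDval, hsBdef, hDdef, hBdef]
      exact cs01 hdc hbc
    have hchain : ψ x ≤ ψ c + 2 * (sD * sB) := by
      have : ψ x - ψ c ≤ 2 * (sD * sB) := by
        rw [hftc]
        calc (∫ t in c..x, ψ' t) ≤ |∫ t in c..x, ψ' t| := le_abs_self _
          _ ≤ 2 * (sD * sB) := habs1.trans (habs2.trans (habs3.trans habs4))
      linarith
    have hBkE2 : B ≤ k * E := by
      calc B = sB * sB := by rw [← hsB]; ring
        _ ≤ (k * sE) * sE := mul_le_mul hBkE hBE hsB0 (by positivity)
        _ = k * E := by rw [← hsE]; ring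
    have hDB : 2 * (sD * sB) ≤ 4 * k * E := by
      calc 2 * (sD * sB) ≤ 2 * ((2 * k * sE) * sE) := by
            refine mul_le_mul_of_nonneg_left (mul_le_mul hsDbound hBE hsB0 (by positivity)) (by norm_num)
        _ = 4 * k * E := by rw [← hsE]; ring
    calc b x ^ 2 = ψ x := (hψb x).symm
      _ ≤ ψ c + 2 * (sD * sB) := hchain
      _ ≤ B + 4 * k * E := by linarith
      _ ≤ k * E + 4 * k * E := by linarith
      _ = 5 * k * E := by ring
  -- conclusion
  have hbx : ∀ x ∈ Set.Icc (0:ℝ) 1, ‖w₁ x‖ ≤ Real.sqrt (5 * k * E) := by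
    intro x hx
    have h := hφbound x hx
    have hb0 : 0 ≤ b x := norm_nonneg _
    have : b x ≤ Real.sqrt (5 * k * E) := by
      rw [show b x = Real.sqrt (b x ^ 2) by rw [Real.sqrt_sq hb0]]
      exact Real.sqrt_le_sqrt h
    exact this
  have hwz : ‖w z‖ ≤ Real.sqrt (5 * k * E) * z := by
    rw [hwFTC z]
    have h := intervalIntegral.norm_integral_le_of_norm_le_const
      (a := 0) (b := z) (C := Real.sqrt (5 * k * E)) (f := w₁) ?_
    · rw [sub_zero, abs_of_nonneg hz.1] at h
      exact h
    · intro x hx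
      rw [Set.uIoc_of_le hz.1] at hx
      exact hbx x ⟨hx.1.le, hx.2.trans hz.2⟩
  rw [hζE]
  refine hwz.trans ?_
  have hfinal : Real.sqrt (5 * k * E) ≤ 3 * (Real.sqrt k * sE) := by
    have h5 : Real.sqrt 5 ≤ 3 := by
      nlinarith [Real.sq_sqrt (by norm_num : (0:ℝ) ≤ 5), Real.sqrt_nonneg 5]
    have heq5 : Real.sqrt (5 * k * E) = Real.sqrt 5 * (Real.sqrt k * sE) := by
      rw [show 5 * k * E = 5 * (k * E) by ring, Real.sqrt_mul (by norm_num),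
        Real.sqrt_mul hk.le, hsEval]
    rw [heq5]
    refine mul_le_mul_of_nonneg_right h5 ?_
    positivity
  calc Real.sqrt (5 * k * E) * z ≤ 3 * (Real.sqrt k * sE) * z :=
        mul_le_mul_of_nonneg_right hfinal hz.1
    _ = 3 * Real.sqrt k * z * Real.sqrt E := by rw [← hsEval]; ring
end

section
/- Lemma (Whitehead–Doering boundary-layer estimate): Let k>0, 0<δ≤1, c₁>0. For all w∈C²([0,1];ℂ) with w(0)=w(1)=0 and all ζ∈C¹([0,1];ℂ) with ζ(0)=ζ(1)=0, one has Re[(1/δ)∫₀^δ w(z)·conj(ζ(z)) dz] ≤ (2/(25k))·δ³·(2c₁‖w''‖²_{L²(0,1)} + (k²/(2c₁))‖w'‖²_{L²(0,1)}) + (1/2)‖ζ'‖²_{L²(0,1)}. -/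
open intervalIntegral Real Complex
open MeasureTheory


lemma aux_exists_zero {h : ℝ → ℝ} (hc : Continuous h)
    (hint : ∫ t in (0:ℝ)..1, h t = 0) : ∃ t₀ ∈ Set.Icc (0:ℝ) 1, h t₀ = 0 := by
  have hi : IntervalIntegrable h volume 0 1 := hc.intervalIntegrable 0 1
  have h1 : ∃ t ∈ Set.Icc (0:ℝ) 1, h t ≤ 0 := by
    by_contra hcon
    push_neg at hcon
    have := intervalIntegral_pos_of_pos_on hi
      (fun x hx => hcon x ⟨hx.1.le, hx.2.le⟩) one_pos
    rw [hint] at this; exact lt_irrefl 0 this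
  have h2 : ∃ t ∈ Set.Icc (0:ℝ) 1, 0 ≤ h t := by
    by_contra hcon
    push_neg at hcon
    have hpos := intervalIntegral_pos_of_pos_on (f := fun t => -h t) hi.neg
      (fun x hx => by simpa using (hcon x ⟨hx.1.le, hx.2.le⟩)) one_pos
    rw [intervalIntegral.integral_neg, hint] at hpos
    norm_num at hpos
  obtain ⟨t₁, ht₁, hh₁⟩ := h1
  obtain ⟨t₂, ht₂, hh₂⟩ := h2
  have hsub : Set.uIcc t₁ t₂ ⊆ Set.Icc (0:ℝ) 1 := by
    rw [← Set.uIcc_of_le (zero_le_one (α := ℝ))]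
    exact Set.uIcc_subset_uIcc (by rwa [Set.uIcc_of_le zero_le_one])
      (by rwa [Set.uIcc_of_le zero_le_one])
  have hmem : (0:ℝ) ∈ Set.uIcc (h t₁) (h t₂) := Set.mem_uIcc.mpr (Or.inl ⟨hh₁, hh₂⟩)
  obtain ⟨t₀, ht₀, h₀⟩ := intermediate_value_uIcc (hc.continuousOn) hmem
  exact ⟨t₀, hsub ht₀, h₀⟩

lemma aux_cs {g : ℝ → ℝ} {z : ℝ} (hz : 0 ≤ z) (hg : Continuous g) (hgnn : ∀ t, 0 ≤ g t) :
    (∫ t in (0:ℝ)..z, g t) ^ 2 ≤ z * ∫ t in (0:ℝ)..z, g t ^ 2 := by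
  have hInn : 0 ≤ ∫ t in (0:ℝ)..z, g t :=
    intervalIntegral.integral_nonneg hz (fun u _ => hgnn u)
  have hJnn : 0 ≤ ∫ t in (0:ℝ)..z, g t ^ 2 :=
    intervalIntegral.integral_nonneg hz (fun u _ => sq_nonneg _)
  set I := ∫ t in (0:ℝ)..z, g t with hIdef
  set J := ∫ t in (0:ℝ)..z, g t ^ 2 with hJdef
  have key : ∀ r : ℝ, 0 < r → I ≤ (r * z + J / r) / 2 := by
    intro r hr
    have hpt : ∀ t ∈ Set.Icc (0:ℝ) z, g t ≤ (r + g t ^ 2 / r) / 2 := by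
      intro t _
      rw [le_div_iff₀ (by norm_num : (0:ℝ) < 2)]
      rw [← sub_nonneg]
      have : r + g t ^ 2 / r - g t * 2 = (r - g t)^2 / r := by field_simp; ring
      rw [this]; positivity
    have hmono := intervalIntegral.integral_mono_on (μ := MeasureTheory.volume) hz (hg.intervalIntegrable 0 z)
      (((continuous_const.add ((hg.pow 2).div_const r)).div_const 2).intervalIntegrable 0 z) hpt
    calc I ≤ ∫ t in (0:ℝ)..z, (r + g t ^ 2 / r) / 2 := hmono
      _ = (r * z + J / r) / 2 := by
        rw [intervalIntegral.integral_div,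
          intervalIntegral.integral_add (f := fun _ => r) (g := fun x => g x ^ 2 / r) (continuous_const.intervalIntegrable 0 z)
            (((hg.pow 2).div_const r).intervalIntegrable 0 z),
          intervalIntegral.integral_const, intervalIntegral.integral_div]
        simp [smul_eq_mul]; ring
  rcases eq_or_lt_of_le hz with hz0 | hz'
  · rw [← hz0] at hIdef ⊢
    simp [hIdef, intervalIntegral.integral_same]
  rcases eq_or_lt_of_le hJnn with hJ0 | hJ0
  · have hI0 : I ≤ 0 := by
      by_contra hcon
      push_neg at hcon
      have hk := key (I / z) (by positivity)
      rw [← hJ0] at hk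
      rw [div_mul_cancel₀ _ (ne_of_gt hz')] at hk
      simp at hk
      linarith
    have hIeq : I = 0 := le_antisymm hI0 hInn
    rw [hIeq, ← hJ0]; simp
  · set r := Real.sqrt J / Real.sqrt z with hrdef
    have hsz := Real.sqrt_pos.mpr hz'
    have hsJ := Real.sqrt_pos.mpr hJ0
    have hr : 0 < r := div_pos hsJ hsz
    have e1 : r * z = Real.sqrt J * Real.sqrt z := by
      rw [hrdef, div_mul_eq_mul_div, mul_div_assoc, Real.div_sqrt]
    have e2 : J / r = Real.sqrt J * Real.sqrt z := by
      rw [hrdef, div_div_eq_mul_div, mul_div_right_comm, Real.div_sqrt, mul_comm]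
    have h3 : I ≤ Real.sqrt J * Real.sqrt z := by
      have hk := key r hr; rw [e1, e2] at hk; linarith
    calc I ^ 2 ≤ (Real.sqrt J * Real.sqrt z) ^ 2 := by
          exact pow_le_pow_left₀ hInn h3 2
      _ = z * J := by rw [mul_pow, Real.sq_sqrt hJnn, Real.sq_sqrt hz]; ring

set_option maxHeartbeats 1000000 in
/-- Whitehead–Doering boundary-layer estimate. -/
theorem stmt11 (k δ c₁ : ℝ) (hk : 0 < k) (hδ : 0 < δ) (hδ1 : δ ≤ 1) (hc₁ : 0 < c₁)
    (w ζ : ℝ → ℂ) (hw : ContDiff ℝ 2 w) (hζ : ContDiff ℝ 1 ζ)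
    (hw0 : w 0 = 0) (hw1 : w 1 = 0) (hζ0 : ζ 0 = 0) (hζ1 : ζ 1 = 0) :
    ((1 / δ) * ∫ z in (0:ℝ)..δ, w z * (starRingEnd ℂ) (ζ z)).re ≤
      (2 / (25 * k)) * δ ^ 3 *
        (2 * c₁ * (∫ z in (0:ℝ)..1, ‖iteratedDeriv 2 w z‖ ^ 2)
          + (k ^ 2 / (2 * c₁)) * (∫ z in (0:ℝ)..1, ‖deriv w z‖ ^ 2))
      + (1/2) * ∫ z in (0:ℝ)..1, ‖deriv ζ z‖ ^ 2 := by
  -- basic differentiability facts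
  have hwd : Differentiable ℝ w := hw.differentiable (by norm_num)
  have hw1' : ContDiff ℝ 1 (deriv w) := by
    have h2 : ((2:ℕ∞) : WithTop ℕ∞) = (1 : WithTop ℕ∞) + 1 := by norm_num
    have := (contDiff_succ_iff_deriv (n := 1)).mp (by exact_mod_cast hw)
    exact this.2.2
  have hwd' : Differentiable ℝ (deriv w) := hw1'.differentiable one_ne_zero
  have cont_w : Continuous w := hw.continuous
  have cont_w' : Continuous (deriv w) := hwd'.continuous
  have hw2eq : iteratedDeriv 2 w = deriv (deriv w) := by
    rw [iteratedDeriv_succ, iteratedDeriv_one]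
  have cont_w'' : Continuous (iteratedDeriv 2 w) := by
    rw [hw2eq]; exact hw1'.continuous_deriv le_rfl
  have hasd_w' : ∀ t : ℝ, HasDerivAt (deriv w) (iteratedDeriv 2 w t) t := fun t => by
    rw [hw2eq]; exact (hwd' t).hasDerivAt
  have hζd : Differentiable ℝ ζ := hζ.differentiable one_ne_zero
  have cont_ζ : Continuous ζ := hζ.continuous
  have cont_ζ' : Continuous (deriv ζ) := hζ.continuous_deriv le_rfl
  -- abbreviations
  set B := ∫ z in (0:ℝ)..1, ‖iteratedDeriv 2 w z‖ ^ 2 with hBdef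
  set C := ∫ z in (0:ℝ)..1, ‖deriv w z‖ ^ 2 with hCdef
  set D := ∫ z in (0:ℝ)..1, ‖deriv ζ z‖ ^ 2 with hDdef
  have hBnn : 0 ≤ B := intervalIntegral.integral_nonneg zero_le_one (fun u _ => sq_nonneg _)
  have hCnn : 0 ≤ C := intervalIntegral.integral_nonneg zero_le_one (fun u _ => sq_nonneg _)
  have hDnn : 0 ≤ D := intervalIntegral.integral_nonneg zero_le_one (fun u _ => sq_nonneg _)
  set P := (2 * c₁ * B + k ^ 2 / (2 * c₁) * C) / k with hPdef
  have hPnn : 0 ≤ P := by positivity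
  -- Step 1 : sup bound on deriv w
  have key1 : ∀ s ∈ Set.Icc (0:ℝ) 1, ‖deriv w s‖ ^ 2 ≤ P := by
    intro s hs
    rcases eq_or_ne (deriv w s) 0 with h0 | h0
    · rw [h0]; simpa using hPnn
    · set v := deriv w s with hvdef
      set u : ℂ := (starRingEnd ℂ) v / ‖v‖ with hudef
      have hvn : (0:ℝ) < ‖v‖ := norm_pos_iff.mpr h0
      have hunorm : ‖u‖ = 1 := by
        rw [hudef, norm_div, RCLike.norm_conj, Complex.norm_real, Real.norm_eq_abs,
          _root_.abs_of_nonneg (norm_nonneg v), div_self (ne_of_gt hvn)]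
      set h : ℝ → ℝ := fun t => (u * deriv w t).re with hhdef
      have hhs : h s = ‖v‖ := by
        have huv : u * v = ((‖v‖ : ℝ) : ℂ) := by
          rw [hudef, div_mul_eq_mul_div, ← Complex.normSq_eq_conj_mul_self]
          rw [Complex.normSq_eq_norm_sq]
          rw [show ((‖v‖ ^ 2 : ℝ) : ℂ) = ((‖v‖ : ℝ) : ℂ) * ((‖v‖ : ℝ) : ℂ) by push_cast; ring]
          rw [mul_div_assoc, div_self (by exact_mod_cast ne_of_gt hvn), mul_one]
        show (u * deriv w s).re = ‖v‖
        rw [← hvdef, huv, Complex.ofReal_re]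
      have habs : ∀ t, |h t| ≤ ‖deriv w t‖ := by
        intro t
        calc |h t| = |(u * deriv w t).re| := rfl
          _ ≤ ‖u * deriv w t‖ := Complex.abs_re_le_norm _
          _ = ‖u * deriv w t‖ := rfl
          _ = ‖deriv w t‖ := by rw [norm_mul, hunorm, one_mul]
      have hhd : ∀ t : ℝ, HasDerivAt h ((u * iteratedDeriv 2 w t).re) t := by
        intro t
        have h1 : HasDerivAt (fun t => u * deriv w t) (u * iteratedDeriv 2 w t) t :=
          (hasd_w' t).const_mul u
        exact (Complex.reCLM.hasFDerivAt.comp_hasDerivAt t h1)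
      have hhc : Continuous h := Complex.continuous_re.comp (continuous_const.mul cont_w')
      have hqc : Continuous fun t => (u * iteratedDeriv 2 w t).re :=
        Complex.continuous_re.comp (continuous_const.mul cont_w'')
      have habs' : ∀ t, |(u * iteratedDeriv 2 w t).re| ≤ ‖iteratedDeriv 2 w t‖ := by
        intro t
        calc |(u * iteratedDeriv 2 w t).re| ≤ ‖u * iteratedDeriv 2 w t‖ :=
              Complex.abs_re_le_norm _
          _ = ‖u * iteratedDeriv 2 w t‖ := rfl
          _ = ‖iteratedDeriv 2 w t‖ := by rw [norm_mul, hunorm, one_mul]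
      have hint0 : ∫ t in (0:ℝ)..1, h t = 0 := by
        have hftc : ∫ t in (0:ℝ)..1, deriv w t = w 1 - w 0 :=
          intervalIntegral.integral_deriv_eq_sub (fun x _ => hwd x)
            (cont_w'.intervalIntegrable 0 1)
        have hcomm : ∫ t in (0:ℝ)..1, u * deriv w t = u * ∫ t in (0:ℝ)..1, deriv w t :=
          intervalIntegral.integral_const_mul u _
        have hre : ∫ t in (0:ℝ)..1, h t = (∫ t in (0:ℝ)..1, u * deriv w t).re := by
          exact Complex.reCLM.intervalIntegral_comp_comm
            ((continuous_const.mul cont_w').intervalIntegrable 0 1)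
        rw [hre, hcomm, hftc, hw1, hw0, sub_zero, mul_zero, Complex.zero_re]
      obtain ⟨t₀, ht₀mem, ht₀⟩ := aux_exists_zero hhc hint0
      -- FTC for h^2
      have hsq : h s ^ 2 = ∫ t in t₀..s, 2 * h t * (u * iteratedDeriv 2 w t).re := by
        have hd2 : ∀ t : ℝ, HasDerivAt (fun t => h t ^ 2)
            (2 * h t * (u * iteratedDeriv 2 w t).re) t := by
          intro t
          have := (hhd t).fun_pow 2
          simpa [mul_comm, mul_assoc] using this
        rw [intervalIntegral.integral_eq_sub_of_hasDerivAt (fun x _ => hd2 x)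
          (((continuous_const.mul hhc).mul hqc).intervalIntegrable t₀ s), ht₀]
        ring
      set q : ℝ → ℝ := fun t => 2 * h t * (u * iteratedDeriv 2 w t).re with hqdef
      have hq_cont : Continuous q := (continuous_const.mul hhc).mul hqc
      have hbound : ∀ t, |q t| ≤ (2 * c₁ / k) * ‖iteratedDeriv 2 w t‖ ^ 2
          + (k / (2 * c₁)) * ‖deriv w t‖ ^ 2 := by
        intro t
        have h1 := habs t
        have h2 := habs' t
        have hq1 : |q t| ≤ 2 * ‖deriv w t‖ * ‖iteratedDeriv 2 w t‖ := by
          rw [hqdef]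
          calc |2 * h t * (u * iteratedDeriv 2 w t).re|
              = 2 * |h t| * |(u * iteratedDeriv 2 w t).re| := by
                rw [abs_mul, abs_mul]; simp [abs_of_nonneg]
            _ ≤ 2 * ‖deriv w t‖ * ‖iteratedDeriv 2 w t‖ := by
                apply mul_le_mul _ h2 (abs_nonneg _) (by positivity)
                exact mul_le_mul_of_nonneg_left h1 (by norm_num)
        refine le_trans hq1 ?_
        have hlam : 0 < 2 * c₁ / k := by positivity
        have hinv : (2 * c₁ / k) * (k / (2 * c₁)) = 1 := by field_simp
        rw [← mul_le_mul_iff_right₀ hlam]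
        nlinarith [sq_nonneg ((2 * c₁ / k) * ‖iteratedDeriv 2 w t‖ - ‖deriv w t‖),
          sq_nonneg (‖deriv w t‖), hinv]
      have hIq : |∫ t in t₀..s, q t| ≤ ∫ t in (0:ℝ)..1, |q t| := by
        have hmono : ∀ a b : ℝ, a ∈ Set.Icc (0:ℝ) 1 → b ∈ Set.Icc (0:ℝ) 1 → a ≤ b →
            |∫ t in a..b, q t| ≤ ∫ t in (0:ℝ)..1, |q t| := by
          intro a b hamem hbmem hab
          calc |∫ t in a..b, q t| ≤ ∫ t in a..b, |q t| := by
                simpa [Real.norm_eq_abs] using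
                  intervalIntegral.norm_integral_le_integral_norm (f := q) hab
            _ ≤ ∫ t in (0:ℝ)..1, |q t| :=
                intervalIntegral.integral_mono_interval hamem.1 hab hbmem.2
                  (Filter.Eventually.of_forall (fun t => abs_nonneg _))
                  (hq_cont.abs.intervalIntegrable 0 1)
        rcases le_total t₀ s with hts | hts
        · exact hmono t₀ s ht₀mem hs hts
        · rw [intervalIntegral.integral_symm, abs_neg]
          exact hmono s t₀ hs ht₀mem hts
      have hintb : (∫ t in (0:ℝ)..1, |q t|) ≤ (2 * c₁ / k) * B + (k / (2 * c₁)) * C := by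
        have hmono := intervalIntegral.integral_mono_on (μ := volume) zero_le_one
          (hq_cont.abs.intervalIntegrable 0 1)
          (((continuous_const.mul (cont_w''.norm.pow 2)).add
            (continuous_const.mul (cont_w'.norm.pow 2))).intervalIntegrable 0 1)
          (fun t _ => hbound t)
        calc (∫ t in (0:ℝ)..1, |q t|)
            ≤ ∫ t in (0:ℝ)..1, ((2 * c₁ / k) * ‖iteratedDeriv 2 w t‖ ^ 2
              + (k / (2 * c₁)) * ‖deriv w t‖ ^ 2) := hmono
          _ = (2 * c₁ / k) * B + (k / (2 * c₁)) * C := by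
              rw [intervalIntegral.integral_add (f := fun t => (2 * c₁ / k) * ‖iteratedDeriv 2 w t‖ ^ 2) (g := fun t => (k / (2 * c₁)) * ‖deriv w t‖ ^ 2)
                ((continuous_const.mul (cont_w''.norm.pow 2)).intervalIntegrable 0 1)
                ((continuous_const.mul (cont_w'.norm.pow 2)).intervalIntegrable 0 1),
                intervalIntegral.integral_const_mul, intervalIntegral.integral_const_mul]
      have hfinal : ‖v‖ ^ 2 ≤ (2 * c₁ / k) * B + (k / (2 * c₁)) * C := by
        calc ‖v‖ ^ 2 = h s ^ 2 := by rw [hhs]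
          _ = ∫ t in t₀..s, q t := hsq
          _ ≤ |∫ t in t₀..s, q t| := le_abs_self _
          _ ≤ ∫ t in (0:ℝ)..1, |q t| := hIq
          _ ≤ (2 * c₁ / k) * B + (k / (2 * c₁)) * C := hintb
      have hPeq : (2 * c₁ / k) * B + (k / (2 * c₁)) * C = P := by
        rw [hPdef]; field_simp
      rw [← hvdef] at *
      rw [← hPeq]
      exact hfinal
  -- Step 2 : pointwise bound on w
  have key2 : ∀ z ∈ Set.Icc (0:ℝ) 1, ‖w z‖ ^ 2 ≤ z ^ 2 * P := by
    intro z hz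
    have hftc : ∫ t in (0:ℝ)..z, deriv w t = w z := by
      rw [intervalIntegral.integral_deriv_eq_sub (fun x _ => hwd x)
        (cont_w'.intervalIntegrable 0 z), hw0, sub_zero]
    have h1 : ‖w z‖ ≤ ∫ t in (0:ℝ)..z, ‖deriv w t‖ := by
      rw [← hftc]
      exact intervalIntegral.norm_integral_le_integral_norm hz.1
    have h2 : (∫ t in (0:ℝ)..z, ‖deriv w t‖) ≤ z * Real.sqrt P := by
      have hmono := intervalIntegral.integral_mono_on (μ := volume) hz.1
        ((cont_w'.norm).intervalIntegrable 0 z)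
        ((continuous_const (y := Real.sqrt P)).intervalIntegrable 0 z)
        (fun t ht => by
          rw [show Real.sqrt P = Real.sqrt P from rfl]
          have hb := key1 t ⟨ht.1, le_trans ht.2 hz.2⟩
          have : ‖deriv w t‖ ≤ Real.sqrt P :=
            (Real.le_sqrt (norm_nonneg _) hPnn).mpr hb
          exact this)
      calc (∫ t in (0:ℝ)..z, ‖deriv w t‖) ≤ ∫ _t in (0:ℝ)..z, Real.sqrt P := hmono
        _ = z * Real.sqrt P := by rw [intervalIntegral.integral_const]; simp [smul_eq_mul]
    have h3 : ‖w z‖ ≤ z * Real.sqrt P := le_trans h1 h2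
    calc ‖w z‖ ^ 2 ≤ (z * Real.sqrt P) ^ 2 := by
          exact pow_le_pow_left₀ (norm_nonneg _) h3 2
      _ = z ^ 2 * P := by rw [mul_pow, Real.sq_sqrt hPnn]
  -- Step 3 : pointwise bound on ζ
  have key3 : ∀ z ∈ Set.Icc (0:ℝ) 1, ‖ζ z‖ ^ 2 ≤ z * D := by
    intro z hz
    have hftc : ∫ t in (0:ℝ)..z, deriv ζ t = ζ z := by
      rw [intervalIntegral.integral_deriv_eq_sub (fun x _ => hζd x)
        (cont_ζ'.intervalIntegrable 0 z), hζ0, sub_zero]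
    have h1 : ‖ζ z‖ ≤ ∫ t in (0:ℝ)..z, ‖deriv ζ t‖ := by
      rw [← hftc]
      exact intervalIntegral.norm_integral_le_integral_norm hz.1
    have h2 : (∫ t in (0:ℝ)..z, ‖deriv ζ t‖) ^ 2 ≤ z * ∫ t in (0:ℝ)..z, ‖deriv ζ t‖ ^ 2 :=
      aux_cs hz.1 cont_ζ'.norm (fun t => norm_nonneg _)
    have h4 : (∫ t in (0:ℝ)..z, ‖deriv ζ t‖ ^ 2) ≤ D := by
      rw [hDdef]
      exact intervalIntegral.integral_mono_interval le_rfl hz.1 hz.2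
        (Filter.Eventually.of_forall (fun t => sq_nonneg _))
        ((cont_ζ'.norm.pow 2).intervalIntegrable 0 1)
    have hnn : 0 ≤ ∫ t in (0:ℝ)..z, ‖deriv ζ t‖ :=
      intervalIntegral.integral_nonneg hz.1 (fun u _ => norm_nonneg _)
    calc ‖ζ z‖ ^ 2 ≤ (∫ t in (0:ℝ)..z, ‖deriv ζ t‖) ^ 2 :=
          pow_le_pow_left₀ (norm_nonneg _) h1 2
      _ ≤ z * ∫ t in (0:ℝ)..z, ‖deriv ζ t‖ ^ 2 := h2
      _ ≤ z * D := by
          exact mul_le_mul_of_nonneg_left h4 hz.1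
  -- Step 4 : pointwise product bound
  set μ := 5 / (2 * δ * Real.sqrt δ) with hμdef
  have hsδ : 0 < Real.sqrt δ := Real.sqrt_pos.mpr hδ
  have hμ : 0 < μ := by positivity
  have key4 : ∀ z ∈ Set.Icc (0:ℝ) δ, ‖w z * (starRingEnd ℂ) (ζ z)‖ ≤
      (1/2) * (P / μ + μ * D) * (z * Real.sqrt z) := by
    intro z hz
    have hz1 : z ∈ Set.Icc (0:ℝ) 1 := ⟨hz.1, le_trans hz.2 hδ1⟩
    have ha2 := key2 z hz1
    have hb2 := key3 z hz1
    have hnorm : ‖w z * (starRingEnd ℂ) (ζ z)‖ = ‖w z‖ * ‖ζ z‖ := by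
      rw [norm_mul, RCLike.norm_conj]
    rw [hnorm]
    rcases eq_or_lt_of_le hz.1 with hz0 | hz0
    · have : w 0 = 0 := hw0
      rw [← hz0, hw0]
      simp
    · set s := Real.sqrt z with hsdef
      have hs : 0 < s := Real.sqrt_pos.mpr hz0
      have hs2 : s ^ 2 = z := Real.sq_sqrt hz.1
      have h2μs : 0 < 2 * μ * s := by positivity
      have ha2' : ‖w z‖ ^ 2 ≤ s ^ 4 * P := by
        rw [show s ^ 4 = z ^ 2 by rw [← hs2]; ring]; exact ha2
      have hb2' : ‖ζ z‖ ^ 2 ≤ s ^ 2 * D := by rw [hs2]; exact hb2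
      have hb3 : μ^2 * s^2 * ‖ζ z‖^2 ≤ μ^2 * s^2 * (s^2 * D) :=
        mul_le_mul_of_nonneg_left hb2' (by positivity)
      have keyy : 2 * μ * s * (‖w z‖ * ‖ζ z‖) ≤ s ^ 4 * (P + μ ^ 2 * D) := by
        nlinarith [sq_nonneg (‖w z‖ - μ * s * ‖ζ z‖), ha2', hb3]
      calc ‖w z‖ * ‖ζ z‖ = (2 * μ * s * (‖w z‖ * ‖ζ z‖)) / (2 * μ * s) := by
            field_simp
        _ ≤ (s ^ 4 * (P + μ ^ 2 * D)) / (2 * μ * s) := by gcongr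
        _ = (1/2) * (P / μ + μ * D) * (z * s) := by
            rw [← hs2]
            have h1 : μ ≠ 0 := ne_of_gt hμ
            have h2 : s ≠ 0 := ne_of_gt hs
            field_simp
  -- Step 5 : integrate
  have hgz_cont : Continuous fun z : ℝ => z * Real.sqrt z :=
    continuous_id.mul Real.continuous_sqrt
  have hprod_cont : Continuous fun z => ‖w z * (starRingEnd ℂ) (ζ z)‖ :=
    (cont_w.mul (continuous_star.comp cont_ζ)).norm
  have hintz : ∫ z in (0:ℝ)..δ, z * Real.sqrt z = 2/5 * (δ^2 * Real.sqrt δ) := by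
    have hcong : Set.EqOn (fun z : ℝ => z * Real.sqrt z) (fun z : ℝ => z ^ (3/2 : ℝ))
        (Set.uIcc (0:ℝ) δ) := by
      intro z hz
      rw [Set.uIcc_of_le hδ.le] at hz
      rcases eq_or_lt_of_le hz.1 with h0 | h0
      · rw [← h0]
        show (0:ℝ) * Real.sqrt 0 = (0:ℝ) ^ (3/2 : ℝ)
        rw [Real.zero_rpow (by norm_num)]
        simp
      · show z * Real.sqrt z = z ^ (3/2 : ℝ)
        rw [show (3/2:ℝ) = 1 + 1/2 by norm_num, Real.rpow_add h0, Real.rpow_one,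
          ← Real.sqrt_eq_rpow]
    rw [intervalIntegral.integral_congr hcong]
    rw [integral_rpow (Or.inl (by norm_num))]
    rw [Real.zero_rpow (by norm_num)]
    rw [show (3/2:ℝ) + 1 = 2 + 1/2 by norm_num, Real.rpow_add hδ, ← Real.sqrt_eq_rpow]
    rw [show (2:ℝ) = ((2:ℕ):ℝ) by norm_num, Real.rpow_natCast]
    ring
  have hstep : ((1 / (δ:ℂ)) * ∫ z in (0:ℝ)..δ, w z * (starRingEnd ℂ) (ζ z)).re ≤
      (1/δ) * ((1/2) * (P / μ + μ * D) * (2/5 * (δ^2 * Real.sqrt δ))) := by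
    rw [show (1 / (δ:ℂ)) = ((1/δ : ℝ) : ℂ) by push_cast; ring, Complex.re_ofReal_mul]
    have h5 : (∫ z in (0:ℝ)..δ, w z * (starRingEnd ℂ) (ζ z)).re ≤
        (1/2) * (P / μ + μ * D) * (2/5 * (δ^2 * Real.sqrt δ)) := by
      calc (∫ z in (0:ℝ)..δ, w z * (starRingEnd ℂ) (ζ z)).re
          ≤ ‖∫ z in (0:ℝ)..δ, w z * (starRingEnd ℂ) (ζ z)‖ := Complex.re_le_norm _
        _ ≤ ∫ z in (0:ℝ)..δ, ‖w z * (starRingEnd ℂ) (ζ z)‖ :=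
            intervalIntegral.norm_integral_le_integral_norm hδ.le
        _ ≤ ∫ z in (0:ℝ)..δ, (1/2) * (P / μ + μ * D) * (z * Real.sqrt z) := by
            apply intervalIntegral.integral_mono_on (μ := volume) hδ.le
              (hprod_cont.intervalIntegrable 0 δ)
              ((continuous_const.mul hgz_cont).intervalIntegrable 0 δ) key4
        _ = (1/2) * (P / μ + μ * D) * ∫ z in (0:ℝ)..δ, z * Real.sqrt z :=
            intervalIntegral.integral_const_mul _ _
        _ = (1/2) * (P / μ + μ * D) * (2/5 * (δ^2 * Real.sqrt δ)) := by rw [hintz]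
    have hδ' : 0 ≤ 1/δ := by positivity
    exact mul_le_mul_of_nonneg_left h5 hδ'
  refine le_trans hstep (le_of_eq ?_)
  have hrr : Real.sqrt δ ^ 2 = δ := Real.sq_sqrt hδ.le
  set r := Real.sqrt δ with hrdef
  rw [hPdef, hμdef, ← hrr]
  have hr0 : 0 < r := hsδ
  field_simp
  ring
end
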